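/- arXiv:1707.05852 — 8 statements merged into one kernel-verified Lean document; each statement's English description precedes it below -/
import Mathlib

section
/- There exists at least one pair (a*, b*) ∈ ℝⁿ × ℝⁿ that globally minimizes the two-estimator cost J, i.e. J(a*, b*) ≤ J(a, b) for all a, b ∈ ℝⁿ, and the minimal cost satisfies J(a*, b*) < J_MS. -/
open MeasureTheory Metric
open scoped RealInnerProductSpace ENNReal

namespace HeterAux

variable {n : ℕ}

local notation "E" => EuclideanSpace ℝ (Fin n)

variable (μ : Measure (EuclideanSpace ℝ (Fin n))) [IsProbabilityMeasure μ]

lemma int_norm (hmom : Integrable (fun x => ‖x‖ ^ 2) μ) :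
    Integrable (fun x : E => ‖x‖) μ := by
  refine ((integrable_const (1:ℝ)).add hmom).mono' continuous_norm.aestronglyMeasurable ?_
  filter_upwards with x
  rw [Real.norm_eq_abs, abs_of_nonneg (norm_nonneg _)]
  simp only [Pi.add_apply]
  nlinarith [norm_nonneg x]

lemma int_id (hmom : Integrable (fun x => ‖x‖ ^ 2) μ) :
    Integrable (fun x : E => x) μ := by
  exact (integrable_norm_iff aestronglyMeasurable_id).1 (int_norm μ hmom)

lemma int_sq (hmom : Integrable (fun x => ‖x‖ ^ 2) μ) (a : E) :
    Integrable (fun x : E => ‖a - x‖ ^ 2) μ := by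
  have hb : Integrable (fun x : E => ‖a‖^2 + 2*‖a‖*‖x‖ + ‖x‖^2) μ :=
    ((integrable_const _).add ((int_norm μ hmom).const_mul _)).add hmom
  refine hb.mono' ?_ ?_
  · exact (continuous_const.sub continuous_id).norm.pow 2 |>.aestronglyMeasurable
  · filter_upwards with x
    rw [Real.norm_eq_abs, abs_of_nonneg (by positivity)]
    have h1 : ‖a - x‖ ≤ ‖a‖ + ‖x‖ := norm_sub_le _ _
    nlinarith [norm_nonneg (a - x), norm_nonneg a, norm_nonneg x]

lemma cont_min (a b : E) :
    Continuous (fun x : E => min (‖a - x‖ ^ 2) (‖b - x‖ ^ 2)) :=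
  ((continuous_const.sub continuous_id).norm.pow 2).min
    ((continuous_const.sub continuous_id).norm.pow 2)

lemma int_min (hmom : Integrable (fun x => ‖x‖ ^ 2) μ) (a b : E) :
    Integrable (fun x : E => min (‖a - x‖ ^ 2) (‖b - x‖ ^ 2)) μ := by
  refine (int_sq μ hmom a).mono' (cont_min a b).aestronglyMeasurable ?_
  filter_upwards with x
  rw [Real.norm_eq_abs, abs_of_nonneg (le_min (by positivity) (by positivity))]
  exact min_le_left _ _

/-- Bias–variance decomposition. -/
lemma bias_var (hmom : Integrable (fun x => ‖x‖ ^ 2) μ) (a : E) :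
    ∫ x, ‖a - x‖ ^ 2 ∂μ
      = ‖a - (∫ y, y ∂μ)‖ ^ 2 + ∫ x, ‖(∫ y, y ∂μ) - x‖ ^ 2 ∂μ := by
  set m : E := ∫ y, y ∂μ with hm
  have hint_id := int_id μ hmom
  have hmx : Integrable (fun x : E => m - x) μ := (integrable_const m).sub hint_id
  have hmean : ∫ x, (m - x) ∂μ = 0 := by
    rw [integral_sub (integrable_const m) hint_id, integral_const]
    simp [hm]
  have hcross : ∫ x, ⟪a - m, m - x⟫ ∂μ = 0 := by
    rw [integral_inner hmx (a - m), hmean, inner_zero_right]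
  have hpt : ∀ x : E, ‖a - x‖ ^ 2
      = ‖a - m‖ ^ 2 + 2 * ⟪a - m, m - x⟫ + ‖m - x‖ ^ 2 := by
    intro x
    have : a - x = (a - m) + (m - x) := by abel
    rw [this, @norm_add_sq_real]
  calc ∫ x, ‖a - x‖ ^ 2 ∂μ
      = ∫ x, (‖a - m‖ ^ 2 + 2 * ⟪a - m, m - x⟫ + ‖m - x‖ ^ 2) ∂μ := by
        exact integral_congr_ae (Filter.Eventually.of_forall hpt)
    _ = ‖a - m‖ ^ 2 + ∫ x, ‖m - x‖ ^ 2 ∂μ := by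
        have h2 : Integrable (fun x : E => 2 * ⟪a - m, m - x⟫) μ :=
          (hmx.const_inner (a - m)).const_mul 2
        have h1 : Integrable (fun x : E => ‖a - m‖ ^ 2 + 2 * ⟪a - m, m - x⟫) μ :=
          (integrable_const _).add h2
        rw [integral_add h1 (int_sq μ hmom m),
          integral_add (integrable_const _) h2,
          MeasureTheory.integral_const_mul, hcross, integral_const]
        simp


/-- Pointwise identity for the symmetric split pair. -/
lemma min_pair_eq (m : E) (e : E) (he : ‖e‖ = 1) (t : ℝ) (ht : 0 ≤ t) (x : E) :
    min (‖(m + t • e) - x‖ ^ 2) (‖(m - t • e) - x‖ ^ 2)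
      = t ^ 2 + ‖m - x‖ ^ 2 - 2 * t * |⟪e, m - x⟫| := by
  set u : E := m - x with hu
  set θ : ℝ := ⟪e, u⟫ with hθ
  have hte : ‖t • e‖ = t := by
    rw [norm_smul, he, Real.norm_eq_abs, abs_of_nonneg ht, mul_one]
  have hA : ‖(m + t • e) - x‖ ^ 2 = t ^ 2 + ‖u‖ ^ 2 + 2 * t * θ := by
    have h1 : (m + t • e) - x = t • e + u := by rw [hu]; abel
    rw [h1, @norm_add_sq_real, hte, real_inner_smul_left]
    ring
  have hB : ‖(m - t • e) - x‖ ^ 2 = t ^ 2 + ‖u‖ ^ 2 - 2 * t * θ := by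
    have h1 : (m - t • e) - x = u - t • e := by rw [hu]; abel
    have h3 : ⟪u, t • e⟫ = t * θ := by
      rw [real_inner_smul_right, real_inner_comm]
    rw [h1, @norm_sub_sq_real, hte, h3]
    ring
  rw [hA, hB]
  rcases abs_cases θ with ⟨h1, h2⟩ | ⟨h1, h2⟩
  · rw [min_eq_right (by nlinarith), h1]
  · rw [min_eq_left (by nlinarith), h1]; ring

lemma int_abs_inner (hmom : Integrable (fun x => ‖x‖ ^ 2) μ) (m e : E) :
    Integrable (fun x : E => |⟪e, m - x⟫|) μ := by
  have hmx : Integrable (fun x : E => m - x) μ :=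
    (integrable_const m).sub (int_id μ hmom)
  exact (hmx.const_inner e).abs

/-- The value of `J` at the split pair. -/
lemma J_split (hmom : Integrable (fun x => ‖x‖ ^ 2) μ) (m e : E) (he : ‖e‖ = 1)
    (t : ℝ) (ht : 0 ≤ t) :
    ∫ x, min (‖(m + t • e) - x‖ ^ 2) (‖(m - t • e) - x‖ ^ 2) ∂μ
      = t ^ 2 + (∫ x, ‖m - x‖ ^ 2 ∂μ) - 2 * t * ∫ x, |⟪e, m - x⟫| ∂μ := by
  have habs := int_abs_inner μ hmom m e
  calc ∫ x, min (‖(m + t • e) - x‖ ^ 2) (‖(m - t • e) - x‖ ^ 2) ∂μ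
      = ∫ x, (t ^ 2 + ‖m - x‖ ^ 2 - 2 * t * |⟪e, m - x⟫|) ∂μ :=
        integral_congr_ae (Filter.Eventually.of_forall fun x =>
          min_pair_eq m e he t ht x)
    _ = t ^ 2 + (∫ x, ‖m - x‖ ^ 2 ∂μ) - 2 * t * ∫ x, |⟪e, m - x⟫| ∂μ := by
        have h2 : Integrable (fun x : E => 2 * t * |⟪e, m - x⟫|) μ :=
          habs.const_mul (2 * t)
        have h1 : Integrable (fun x : E => t ^ 2 + ‖m - x‖ ^ 2) μ :=
          (integrable_const _).add (int_sq μ hmom m)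
        rw [integral_sub h1 h2,
          integral_add (integrable_const _) (int_sq μ hmom m),
          MeasureTheory.integral_const_mul, integral_const]
        simp

/-- Positivity of the mean absolute deviation in direction `e`. -/
lemma c_pos (hac : μ ≪ volume) (hmom : Integrable (fun x => ‖x‖ ^ 2) μ)
    (m e : E) (he : ‖e‖ = 1) :
    0 < ∫ x, |⟪e, m - x⟫| ∂μ := by
  have habs := int_abs_inner μ hmom m e
  rw [integral_pos_iff_support_of_nonneg_ae
    (Filter.Eventually.of_forall fun x => abs_nonneg _) habs]
  -- support is the complement of the affine hyperplane {x | ⟪e, m - x⟫ = 0}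
  have hker : volume {y : E | ⟪e, y⟫ = (0:ℝ)} = 0 := by
    have : {y : E | ⟪e, y⟫ = (0:ℝ)}
        = (LinearMap.ker (innerSL ℝ e).toLinearMap : Submodule ℝ (EuclideanSpace ℝ (Fin n))) := by
      ext y; simp [LinearMap.mem_ker]
    rw [this]
    refine Measure.addHaar_submodule _ _ ?_
    intro htop
    have : e ∈ LinearMap.ker (innerSL ℝ e).toLinearMap := htop ▸ Submodule.mem_top
    simp only [LinearMap.mem_ker, ContinuousLinearMap.coe_coe, innerSL_apply_apply] at this
    rw [real_inner_self_eq_norm_sq, he] at this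
    norm_num at this
  have hplane : volume {x : E | ⟪e, m - x⟫ = (0:ℝ)} = 0 := by
    have hset : {x : E | ⟪e, m - x⟫ = (0:ℝ)}
        = (fun x : E => x + (-m)) ⁻¹' {y : E | ⟪e, -y⟫ = (0:ℝ)} := by
      ext x
      simp only [Set.mem_setOf_eq, Set.mem_preimage]
      constructor <;> intro h <;> [skip; skip] <;>
        · rw [show m - x = -(x + -m) by abel] at * <;> simpa using h
    rw [hset, measure_preimage_add_right]
    have : {y : E | ⟪e, -y⟫ = (0:ℝ)} = {y : E | ⟪e, y⟫ = (0:ℝ)} := by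
      ext y; simp [inner_neg_right, neg_eq_zero]
    rw [this]; exact hker
  have hμplane : μ {x : E | ⟪e, m - x⟫ = (0:ℝ)} = 0 := hac hplane
  have hsupp : {x : E | ⟪e, m - x⟫ = (0:ℝ)}ᶜ
      ⊆ Function.support fun x : E => |⟪e, m - x⟫| := by
    intro x hx
    simp only [Set.mem_compl_iff, Set.mem_setOf_eq] at hx
    simpa [Function.mem_support, abs_eq_zero] using hx
  have hcont : Continuous fun x : E => ⟪e, m - x⟫ :=
    Continuous.inner continuous_const (continuous_const.sub continuous_id)
  have hms : MeasurableSet {x : E | ⟪e, m - x⟫ = (0:ℝ)} :=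
    measurableSet_eq_fun hcont.measurable measurable_const
  have h1 : μ ({x : E | ⟪e, m - x⟫ = (0:ℝ)}ᶜ) = 1 := by
    rw [measure_compl hms (measure_ne_top μ _), hμplane, measure_univ]
    simp
  calc (0:ℝ≥0∞) < 1 := by norm_num
    _ = μ ({x : E | ⟪e, m - x⟫ = (0:ℝ)}ᶜ) := h1.symm
    _ ≤ μ (Function.support fun x : E => |⟪e, m - x⟫|) := measure_mono hsupp


lemma int_shift_sq (hmom : Integrable (fun x => ‖x‖ ^ 2) μ) (c : ℝ) (hc : 0 ≤ c) :
    Integrable (fun x : E => (c + ‖x‖) ^ 2) μ := by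
  have hb : Integrable (fun x : E => c ^ 2 + 2 * c * ‖x‖ + ‖x‖ ^ 2) μ :=
    ((integrable_const _).add ((int_norm μ hmom).const_mul _)).add hmom
  have : (fun x : E => (c + ‖x‖) ^ 2)
      = fun x : E => c ^ 2 + 2 * c * ‖x‖ + ‖x‖ ^ 2 := by
    funext x; ring
  rw [this]; exact hb

/-- Continuity of the two-estimator cost. -/
lemma cont_J (hmom : Integrable (fun x => ‖x‖ ^ 2) μ) :
    Continuous (fun p : (EuclideanSpace ℝ (Fin n)) × (EuclideanSpace ℝ (Fin n)) =>
      ∫ x, min (‖p.1 - x‖ ^ 2) (‖p.2 - x‖ ^ 2) ∂μ) := by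
  rw [continuous_iff_continuousAt]
  intro p
  have hb : Integrable (fun x : E => ((‖p.1‖ + 1) + ‖x‖) ^ 2) μ :=
    int_shift_sq μ hmom _ (by positivity)
  refine tendsto_integral_filter_of_dominated_convergence
      (fun x : E => ((‖p.1‖ + 1) + ‖x‖) ^ 2) ?_ ?_ hb ?_
  · filter_upwards with q using (cont_min q.1 q.2).aestronglyMeasurable
  · have hmem : Metric.ball p 1 ∈ nhds p := Metric.ball_mem_nhds p one_pos
    filter_upwards [hmem] with q hq
    filter_upwards with x
    have hd : dist q.1 p.1 < 1 := lt_of_le_of_lt (by rw [Prod.dist_eq]; exact le_max_left _ _) (Metric.mem_ball.1 hq)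
    have h1 : ‖q.1‖ ≤ ‖p.1‖ + 1 := by
      have h' : ‖q.1 - p.1‖ < 1 := by rwa [← dist_eq_norm]
      have h'' := norm_sub_norm_le q.1 p.1
      linarith
    rw [Real.norm_eq_abs, abs_of_nonneg (le_min (by positivity) (by positivity))]
    have h2 : ‖q.1 - x‖ ≤ (‖p.1‖ + 1) + ‖x‖ :=
      (norm_sub_le _ _).trans (by linarith)
    calc min (‖q.1 - x‖ ^ 2) (‖q.2 - x‖ ^ 2) ≤ ‖q.1 - x‖ ^ 2 := min_le_left _ _
      _ ≤ ((‖p.1‖ + 1) + ‖x‖) ^ 2 := by nlinarith [norm_nonneg (q.1 - x)]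
  · filter_upwards with x
    have hcont : Continuous fun q : (EuclideanSpace ℝ (Fin n)) × (EuclideanSpace ℝ (Fin n)) =>
        min (‖q.1 - x‖ ^ 2) (‖q.2 - x‖ ^ 2) :=
      (((continuous_fst.sub continuous_const).norm.pow 2).min
        ((continuous_snd.sub continuous_const).norm.pow 2))
    exact hcont.tendsto p

/-- Tails of an integrable nonnegative function are small. -/
lemma tail_small (g : E → ℝ) (hg : Integrable g μ) (hg0 : ∀ x, 0 ≤ g x)
    (ε : ℝ) (hε : 0 < ε) (R0 : ℝ) :
    ∃ R : ℝ, R0 ≤ R ∧ 0 ≤ R ∧ ∫ x in (closedBall (0:E) R)ᶜ, g x ∂μ ≤ ε := by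
  have hmono : Monotone fun k : ℕ => closedBall (0:E) k := fun i j hij =>
    closedBall_subset_closedBall (by exact_mod_cast hij)
  have hunion : (⋃ k : ℕ, closedBall (0:E) k) = Set.univ := iUnion_closedBall_nat 0
  have htd := tendsto_setIntegral_of_monotone (μ := μ) (f := g)
    (fun k : ℕ => measurableSet_closedBall) hmono (by rw [hunion]; exact hg.integrableOn)
  rw [hunion, setIntegral_univ] at htd
  have hev : ∀ᶠ k : ℕ in Filter.atTop,
      (∫ x, g x ∂μ) - ε ≤ ∫ x in closedBall (0:E) k, g x ∂μ :=
    htd.eventually_const_le (by linarith)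
  obtain ⟨N, hN⟩ := Filter.eventually_atTop.1 hev
  obtain ⟨k0, hk0⟩ := exists_nat_ge R0
  set k := max N k0 with hkdef
  have hkint := hN k (le_max_left _ _)
  have hk : R0 ≤ (k:ℝ) := hk0.trans (by exact_mod_cast le_max_right N k0)
  refine ⟨(k:ℝ), hk, Nat.cast_nonneg k, ?_⟩
  have hsplit := integral_add_compl (measurableSet_closedBall
    (x := (0:E)) (ε := (k:ℝ))) hg
  linarith [hkint]

end HeterAux

set_option maxHeartbeats 1000000 in
open HeterAux in
/-- **Existence of a globally optimal heterarchical pair of estimators.** -/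
theorem heterarchical_global_min_exists
    (n : ℕ) (hn : 1 ≤ n)
    (μ : Measure (EuclideanSpace ℝ (Fin n))) [IsProbabilityMeasure μ]
    (hac : μ ≪ volume)
    (hmom : Integrable (fun x => ‖x‖ ^ 2) μ) :
    ∃ astar bstar : EuclideanSpace ℝ (Fin n),
      (∀ a b : EuclideanSpace ℝ (Fin n),
          ∫ x, min (‖astar - x‖ ^ 2) (‖bstar - x‖ ^ 2) ∂μ ≤
            ∫ x, min (‖a - x‖ ^ 2) (‖b - x‖ ^ 2) ∂μ) ∧
      ∫ x, min (‖astar - x‖ ^ 2) (‖bstar - x‖ ^ 2) ∂μ <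
        ∫ x, ‖x - (∫ y, y ∂μ)‖ ^ 2 ∂μ := by
  classical
  set m : EuclideanSpace ℝ (Fin n) := ∫ y, y ∂μ with hm
  have hJMSeq : ∫ x, ‖x - m‖ ^ 2 ∂μ = ∫ x, ‖m - x‖ ^ 2 ∂μ :=
    integral_congr_ae (Filter.Eventually.of_forall fun x => by
      show ‖x - m‖ ^ 2 = ‖m - x‖ ^ 2
      rw [norm_sub_rev])
  set JMS : ℝ := ∫ x, ‖m - x‖ ^ 2 ∂μ with hJMS
  set e : EuclideanSpace ℝ (Fin n) := EuclideanSpace.single ⟨0, hn⟩ (1:ℝ) with he_def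
  have he : ‖e‖ = 1 := by rw [he_def, EuclideanSpace.norm_single]; norm_num
  set c : ℝ := ∫ x, |⟪e, m - x⟫| ∂μ with hc_def
  have hc : 0 < c := c_pos μ hac hmom m e he
  set a0 : EuclideanSpace ℝ (Fin n) := m + c • e with ha0
  set b0 : EuclideanSpace ℝ (Fin n) := m - c • e with hb0
  set C : ℝ := JMS - c ^ 2 with hC
  have hJ0 : ∫ x, min (‖a0 - x‖ ^ 2) (‖b0 - x‖ ^ 2) ∂μ = C := by
    rw [ha0, hb0, J_split μ hmom m e he c hc.le, ← hc_def, ← hJMS, hC]; ring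
  -- a ball with at least half the mass
  obtain ⟨R0, hR00, hhalf⟩ :
      ∃ R0 : ℝ, 0 ≤ R0 ∧ (1:ℝ)/2 ≤ (μ (Metric.closedBall (0:EuclideanSpace ℝ (Fin n)) R0)).toReal := by
    have hmono : Monotone fun k : ℕ => Metric.closedBall (0:EuclideanSpace ℝ (Fin n)) k :=
      fun i j hij => Metric.closedBall_subset_closedBall (by exact_mod_cast hij)
    have htd := tendsto_measure_iUnion_atTop (μ := μ) hmono
    rw [Metric.iUnion_closedBall_nat, measure_univ] at htd
    have hev := htd.eventually_const_le (by norm_num : (1/2 : ENNReal) < 1)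
    obtain ⟨k, hk⟩ := hev.exists
    refine ⟨(k:ℝ), Nat.cast_nonneg k, ?_⟩
    have := ENNReal.toReal_mono (measure_ne_top μ _) hk
    simpa using this
  -- choose S
  set S : ℝ := max (max ‖a0‖ ‖b0‖) (R0 + Real.sqrt (2 * |C|) + 1) with hSdef
  have hSa0 : ‖a0‖ ≤ S := le_trans (le_max_left _ _) (le_max_left _ _)
  have hSb0 : ‖b0‖ ≤ S := le_trans (le_max_right _ _) (le_max_left _ _)
  have hSR0' : R0 + Real.sqrt (2 * |C|) + 1 ≤ S := le_max_right _ _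
  have hsq : Real.sqrt (2 * |C|) ^ 2 = 2 * |C| := Real.sq_sqrt (by positivity)
  have hsqnn : 0 ≤ Real.sqrt (2 * |C|) := Real.sqrt_nonneg _
  have hR0S : R0 ≤ S := by linarith
  have hS0 : 0 ≤ S := by linarith
  have hS3 : C < 1/2 * (S - R0) ^ 2 := by
    nlinarith [le_abs_self C, abs_nonneg C]
  -- tail bound
  obtain ⟨R1, hR01, hR10, htail⟩ := tail_small μ (fun x => (S + ‖x‖) ^ 2)
    (int_shift_sq μ hmom S hS0) (fun x => by positivity) (c ^ 2 / 2) (by positivity) R0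
  set R : ℝ := S + 2 * R1 with hRdef
  have hSR : S ≤ R := by linarith
  clear_value m JMS e c a0 b0 C S R
  -- the coercivity claim
  have key : ∀ a b : EuclideanSpace ℝ (Fin n), ‖a‖ ≤ ‖b‖ → R < ‖b‖ →
      C < ∫ x, min (‖a - x‖ ^ 2) (‖b - x‖ ^ 2) ∂μ := by
    intro a b hab hbR
    have hminint := int_min μ hmom a b
    by_cases haS : ‖a‖ ≤ S
    · -- far point is irrelevant on the ball of radius R1
      have hstep1 : ∫ x in Metric.closedBall (0:EuclideanSpace ℝ (Fin n)) R1,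
          min (‖a - x‖ ^ 2) (‖b - x‖ ^ 2) ∂μ ≤ ∫ x, min (‖a - x‖ ^ 2) (‖b - x‖ ^ 2) ∂μ :=
        setIntegral_le_integral hminint
          (Filter.Eventually.of_forall fun x => le_min (by positivity) (by positivity))
      have heqon : Set.EqOn (fun x => min (‖a - x‖ ^ 2) (‖b - x‖ ^ 2))
          (fun x => ‖a - x‖ ^ 2) (Metric.closedBall (0:EuclideanSpace ℝ (Fin n)) R1) := by
        intro x hx
        rw [Metric.mem_closedBall, dist_zero_right] at hx
        have h1 : ‖a - x‖ ≤ S + R1 := (norm_sub_le _ _).trans (by linarith)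
        have h2 : S + R1 ≤ ‖b - x‖ := by
          have h3 := norm_sub_norm_le b x
          rw [hRdef] at hbR
          linarith
        exact min_eq_left (by nlinarith [norm_nonneg (a - x), norm_nonneg (b - x)])
      have hstep2 := setIntegral_congr_fun (μ := μ)
        (measurableSet_closedBall (x := (0:EuclideanSpace ℝ (Fin n))) (ε := R1)) heqon
      have hsplit := integral_add_compl
        (measurableSet_closedBall (x := (0:EuclideanSpace ℝ (Fin n))) (ε := R1)) (int_sq μ hmom a)
      have htail2 : ∫ x in (Metric.closedBall (0:EuclideanSpace ℝ (Fin n)) R1)ᶜ, ‖a - x‖ ^ 2 ∂μ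
          ≤ ∫ x in (Metric.closedBall (0:EuclideanSpace ℝ (Fin n)) R1)ᶜ, (S + ‖x‖) ^ 2 ∂μ := by
        refine setIntegral_mono_on ((int_sq μ hmom a).integrableOn)
          ((int_shift_sq μ hmom S hS0).integrableOn) measurableSet_closedBall.compl ?_
        intro x _
        have h1 : ‖a - x‖ ≤ S + ‖x‖ := (norm_sub_le _ _).trans (by linarith [norm_nonneg x])
        nlinarith [norm_nonneg (a - x)]
      have hbv : JMS ≤ ∫ x, ‖a - x‖ ^ 2 ∂μ := by
        rw [bias_var μ hmom a, ← hm, ← hJMS]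
        nlinarith [sq_nonneg ‖a - m‖]
      calc C = JMS - c ^ 2 := hC
        _ < JMS - c ^ 2 / 2 := by nlinarith
        _ ≤ ∫ x in Metric.closedBall (0:EuclideanSpace ℝ (Fin n)) R1, ‖a - x‖ ^ 2 ∂μ := by
            linarith
        _ = ∫ x in Metric.closedBall (0:EuclideanSpace ℝ (Fin n)) R1,
              min (‖a - x‖ ^ 2) (‖b - x‖ ^ 2) ∂μ := hstep2.symm
        _ ≤ _ := hstep1
    · -- both points are far: use the half-mass ball
      push_neg at haS
      have hstep1 : ∫ x in Metric.closedBall (0:EuclideanSpace ℝ (Fin n)) R0,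
          min (‖a - x‖ ^ 2) (‖b - x‖ ^ 2) ∂μ ≤ ∫ x, min (‖a - x‖ ^ 2) (‖b - x‖ ^ 2) ∂μ :=
        setIntegral_le_integral hminint
          (Filter.Eventually.of_forall fun x => le_min (by positivity) (by positivity))
      have hconst : ∀ x ∈ Metric.closedBall (0:EuclideanSpace ℝ (Fin n)) R0,
          (S - R0) ^ 2 ≤ min (‖a - x‖ ^ 2) (‖b - x‖ ^ 2) := by
        intro x hx
        rw [Metric.mem_closedBall, dist_zero_right] at hx
        have hbS : S < ‖b‖ := lt_of_le_of_lt hSR hbR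
        have h1 : S - R0 ≤ ‖a - x‖ := by linarith [norm_sub_norm_le a x]
        have h2 : S - R0 ≤ ‖b - x‖ := by linarith [norm_sub_norm_le b x]
        have h0 : 0 ≤ S - R0 := by linarith
        exact le_min (by nlinarith) (by nlinarith)
      calc C < 1/2 * (S - R0) ^ 2 := hS3
        _ ≤ (μ (Metric.closedBall (0:EuclideanSpace ℝ (Fin n)) R0)).toReal * (S - R0) ^ 2 := by
            nlinarith [sq_nonneg (S - R0)]
        _ = ∫ _x in Metric.closedBall (0:EuclideanSpace ℝ (Fin n)) R0, (S - R0) ^ 2 ∂μ := by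
            rw [setIntegral_const, smul_eq_mul]; rfl
        _ ≤ ∫ x in Metric.closedBall (0:EuclideanSpace ℝ (Fin n)) R0,
              min (‖a - x‖ ^ 2) (‖b - x‖ ^ 2) ∂μ :=
            setIntegral_mono_on (integrableOn_const (measure_ne_top μ _))
              (hminint.integrableOn) measurableSet_closedBall hconst
        _ ≤ _ := hstep1
  -- symmetric version
  have key2 : ∀ a b : EuclideanSpace ℝ (Fin n), R < max ‖a‖ ‖b‖ →
      C < ∫ x, min (‖a - x‖ ^ 2) (‖b - x‖ ^ 2) ∂μ := by
    intro a b h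
    rcases le_total ‖a‖ ‖b‖ with hab | hab
    · exact key a b hab (by rwa [max_eq_right hab] at h)
    · have h' := key b a hab (by rwa [max_eq_left hab] at h)
      have hcomm : ∫ x, min (‖a - x‖ ^ 2) (‖b - x‖ ^ 2) ∂μ
          = ∫ x, min (‖b - x‖ ^ 2) (‖a - x‖ ^ 2) ∂μ :=
        integral_congr_ae (Filter.Eventually.of_forall fun x => min_comm _ _)
      rw [hcomm]; exact h'
  -- minimize on the compact set
  set K : Set ((EuclideanSpace ℝ (Fin n)) × (EuclideanSpace ℝ (Fin n))) :=
    Metric.closedBall 0 R ×ˢ Metric.closedBall 0 R with hK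
  clear_value K
  have hKc : IsCompact K := by
    rw [hK]
    exact (isCompact_closedBall _ _).prod (isCompact_closedBall _ _)
  have hmemK : (a0, b0) ∈ K := by
    rw [hK]
    refine ⟨?_, ?_⟩ <;> rw [Metric.mem_closedBall, dist_zero_right]
    · exact hSa0.trans hSR
    · exact hSb0.trans hSR
  obtain ⟨p, hpK, hpmin⟩ := hKc.exists_isMinOn ⟨(a0, b0), hmemK⟩
    ((cont_J μ hmom).continuousOn)
  have hpC : ∫ x, min (‖p.1 - x‖ ^ 2) (‖p.2 - x‖ ^ 2) ∂μ ≤ C := by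
    have h := isMinOn_iff.1 hpmin (a0, b0) hmemK
    simpa [hJ0] using h
  refine ⟨p.1, p.2, ?_, ?_⟩
  · intro a b
    by_cases hab : (a, b) ∈ K
    · exact isMinOn_iff.1 hpmin (a, b) hab
    · have hout : R < max ‖a‖ ‖b‖ := by
        rw [hK, Set.mem_prod] at hab
        simp only [Metric.mem_closedBall, dist_zero_right, not_and_or, not_le] at hab
        rcases hab with h | h
        · exact lt_of_lt_of_le h (le_max_left _ _)
        · exact lt_of_lt_of_le h (le_max_right _ _)
      exact le_of_lt (lt_of_le_of_lt hpC (key2 a b hout))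
  · rw [hJMSeq]
    have : 0 < c ^ 2 := pow_pos hc 2
    calc ∫ x, min (‖p.1 - x‖ ^ 2) (‖p.2 - x‖ ^ 2) ∂μ ≤ C := hpC
      _ < JMS := by rw [hC]; linarith
end

section
/- Every global minimizer (a*, b*) of the two-estimator cost J satisfies a* ≠ b*, both Voronoi regions have positive measure (μ(V₁(a*, b*)) > 0 and μ(V₂(a*, b*)) > 0), and each estimator is the centroid of its own Voronoi region: a* · μ(V₁(a*, b*)) = ∫_{V₁(a*, b*)} x dμ(x) and b* · μ(V₂(a*, b*)) = ∫_{V₂(a*, b*)} x dμ(x). -/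
open MeasureTheory Set
open scoped RealInnerProductSpace

section Helpers

/-- A hyperplane in Euclidean space has Lebesgue measure zero. -/
lemma hetero_hyp_null {n : ℕ} (v : EuclideanSpace ℝ (Fin n)) (hv : v ≠ 0) (c : ℝ) :
    (volume : Measure (EuclideanSpace ℝ (Fin n))) {x | ⟪v, x⟫ = c} = 0 := by
  set f : EuclideanSpace ℝ (Fin n) →ᵃ[ℝ] ℝ := (innerSL ℝ v).toLinearMap.toAffineMap
  set S : AffineSubspace ℝ (EuclideanSpace ℝ (Fin n)) :=
    AffineSubspace.comap f (AffineSubspace.mk' c (⊥ : Submodule ℝ ℝ))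
  have hmem : ∀ x, x ∈ S ↔ ⟪v, x⟫ = c := by
    intro x
    simp [S, AffineSubspace.mem_comap, AffineSubspace.mem_mk', sub_eq_zero, f]
  have hS : S ≠ ⊤ := by
    intro h
    have h0 : ⟪v, (0:EuclideanSpace ℝ (Fin n))⟫ = c := (hmem 0).1 (h ▸ AffineSubspace.mem_top ℝ _ _)
    have hvv : ⟪v, v⟫ = c := (hmem v).1 (h ▸ AffineSubspace.mem_top ℝ _ _)
    rw [inner_zero_right] at h0
    rw [← h0, inner_self_eq_zero] at hvv
    exact hv hvv
  have hnull := Measure.addHaar_affineSubspace (volume : Measure (EuclideanSpace ℝ (Fin n))) S hS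
  have hset : {x : EuclideanSpace ℝ (Fin n) | ⟪v, x⟫ = c}
      = (S : Set (EuclideanSpace ℝ (Fin n))) := by
    ext x; simpa using (hmem x).symm
  rw [hset]; exact hnull

/-- A nonatomic probability measure on `ℝ` can be split by some point `t` into two
parts of positive measure. -/
lemma hetero_exists_split (ν : Measure ℝ) [IsProbabilityMeasure ν] (hν : ∀ t : ℝ, ν {t} = 0) :
    ∃ t : ℝ, 0 < ν (Set.Iio t) ∧ 0 < ν (Set.Ioi t) := by
  have hIio_univ : (⋃ k : ℕ, Iio (k : ℝ)) = univ := by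
    ext x; simp only [mem_iUnion, mem_Iio, mem_univ, iff_true]
    exact exists_nat_gt x
  have hIoi_univ : (⋃ k : ℕ, Ioi (-(k : ℝ))) = univ := by
    ext x; simp only [mem_iUnion, mem_Ioi, mem_univ, iff_true]
    obtain ⟨k, hk⟩ := exists_nat_gt (-x)
    exact ⟨k, by linarith⟩
  have hone : ν univ = 1 := measure_univ
  have hB : ∃ N : ℝ, 0 < ν (Iio N) := by
    by_contra h
    push_neg at h
    have : ν (⋃ k : ℕ, Iio (k : ℝ)) = 0 :=
      measure_iUnion_null fun k => le_antisymm (h _) (zero_le)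
    rw [hIio_univ, hone] at this; exact one_ne_zero this
  by_cases hA : ∃ t₀ : ℝ, ν (Iio t₀) = 0
  · set A := {t : ℝ | ν (Iio t) = 0} with hAdef
    have hAne : A.Nonempty := hA
    have hAbdd : BddAbove A := by
      obtain ⟨N, hN⟩ := hB
      refine ⟨N, fun a ha => ?_⟩
      by_contra hle
      push_neg at hle
      have : ν (Iio N) ≤ ν (Iio a) := measure_mono (Iio_subset_Iio hle.le)
      rw [ha] at this
      exact absurd (le_antisymm this (zero_le)) hN.ne'
    set s := sSup A
    have hIios : ν (Iio s) = 0 := by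
      have hsub : Iio s ⊆ ⋃ k : ℕ, Iio (s - 1/(k+1)) := by
        intro x hx
        simp only [mem_iUnion, mem_Iio]
        obtain ⟨k, hk⟩ := exists_nat_gt (1/(s - x))
        refine ⟨k, ?_⟩
        have hsx : 0 < s - x := by simpa [sub_pos] using hx
        have hk1 : 1/(s-x) < k + 1 := by linarith [Nat.cast_nonneg (α := ℝ) k]
        have : 1/((k:ℝ)+1) < s - x := by
          rw [div_lt_iff₀ (by positivity)] at hk1 ⊢
          · nlinarith
        linarith
      refine le_antisymm (le_trans (measure_mono hsub) ?_) (zero_le)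
      refine le_of_eq (measure_iUnion_null fun k => ?_)
      have hlt : s - 1/((k:ℝ)+1) < s := by
        have : (0:ℝ) < 1/((k:ℝ)+1) := by positivity
        linarith
      obtain ⟨a, haA, hla⟩ := exists_lt_of_lt_csSup hAne hlt
      exact le_antisymm (le_trans (measure_mono (Iio_subset_Iio hla.le)) haA.le) (zero_le)
    have hIoi_pos : ∀ ε : ℝ, 0 < ε → 0 < ν (Iio (s + ε)) := by
      intro ε hε
      rcases eq_or_lt_of_le ((zero_le : 0 ≤ ν (Iio (s+ε)))) with h | h
      · exfalso
        have hmem : s + ε ∈ A := h.symm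
        have := le_csSup hAbdd hmem
        linarith
      · exact h
    have hIois : 0 < ν (Ioi s) := by
      have hcover : (univ : Set ℝ) ⊆ Iio s ∪ {s} ∪ Ioi s := by
        intro x _
        rcases lt_trichotomy x s with h | h | h
        · exact Or.inl (Or.inl h)
        · exact Or.inl (Or.inr h)
        · exact Or.inr h
      by_contra h
      push_neg at h
      have h0 : ν (Ioi s) = 0 := le_antisymm h (zero_le)
      have hle : ν univ ≤ ν (Iio s) + ν {s} + ν (Ioi s) :=
        le_trans (measure_mono hcover)
          (le_trans (measure_union_le _ _) (by gcongr; exact measure_union_le _ _))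
      rw [hone, hIios, hν s, h0] at hle
      simp at hle
    have hUn : Ioi s = ⋃ k : ℕ, Ioi (s + 1/(k+1)) := by
      ext x
      simp only [mem_iUnion, mem_Ioi]
      constructor
      · intro hx
        obtain ⟨k, hk⟩ := exists_nat_gt (1/(x - s))
        refine ⟨k, ?_⟩
        have hsx : 0 < x - s := sub_pos.2 hx
        have hk1 : 1/(x-s) < k + 1 := by linarith [Nat.cast_nonneg (α := ℝ) k]
        have : 1/((k:ℝ)+1) < x - s := by
          rw [div_lt_iff₀ (by positivity)] at hk1 ⊢
          · nlinarith
        linarith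
      · rintro ⟨k, hk⟩
        have : (0:ℝ) < 1/((k:ℝ)+1) := by positivity
        linarith
    have hex : ∃ k : ℕ, 0 < ν (Ioi (s + 1/(k+1))) := by
      by_contra h
      push_neg at h
      have : ν (Ioi s) = 0 := by
        rw [hUn]
        exact measure_iUnion_null fun k => le_antisymm (h k) (zero_le)
      rw [this] at hIois; exact lt_irrefl _ hIois
    obtain ⟨k, hk⟩ := hex
    exact ⟨s + 1/(k+1), hIoi_pos _ (by positivity), hk⟩
  · push_neg at hA
    have hA' : ∀ t : ℝ, 0 < ν (Iio t) := fun t =>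
      (zero_le).lt_of_ne fun h => hA t h.symm
    have hex : ∃ t : ℝ, 0 < ν (Ioi t) := by
      by_contra h
      push_neg at h
      have : ν (⋃ k : ℕ, Ioi (-(k:ℝ))) = 0 :=
        measure_iUnion_null fun k => le_antisymm (h _) (zero_le)
      rw [hIoi_univ, hone] at this; exact one_ne_zero this
    obtain ⟨t, ht⟩ := hex
    exact ⟨t, hA' t, ht⟩

/-- Strictly convex quadratic functionals have a unique minimizer. -/
lemma hetero_quad_min {F : Type*} [NormedAddCommGroup F] [InnerProductSpace ℝ F] {m : ℝ}
    (hm : 0 < m) {I a0 : F}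
    (h : ∀ a : F, m * ‖a0‖^2 - 2 * ⟪a0, I⟫ ≤ m * ‖a‖^2 - 2 * ⟪a, I⟫) :
    m • a0 = I := by
  set v := I - m • a0 with hv
  have hI : I = v + m • a0 := by rw [hv]; abel
  have key := h (a0 + m⁻¹ • v)
  have hnorm : ‖a0 + m⁻¹ • v‖^2 = ‖a0‖^2 + 2 * (m⁻¹ * ⟪a0, v⟫) + m⁻¹^2 * ‖v‖^2 := by
    rw [norm_add_sq_real, real_inner_smul_right, norm_smul]
    simp [abs_of_pos (inv_pos.2 hm), mul_pow]
  have hinner : ⟪a0 + m⁻¹ • v, I⟫ = ⟪a0, I⟫ + m⁻¹ * ⟪v, I⟫ := by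
    rw [inner_add_left, real_inner_smul_left]
  have hvI : ⟪v, I⟫ = ‖v‖^2 + m * ⟪a0, v⟫ := by
    rw [hI, inner_add_right, real_inner_smul_right, real_inner_self_eq_norm_sq,
      real_inner_comm]
  rw [hnorm, hinner, hvI] at key
  have hm' : m ≠ 0 := hm.ne'
  have hv0 : ‖v‖^2 ≤ 0 := by
    have e : m * (‖a0‖^2 + 2*(m⁻¹ * ⟪a0,v⟫) + m⁻¹^2*‖v‖^2) - 2*(⟪a0,I⟫ + m⁻¹*(‖v‖^2 + m * ⟪a0,v⟫))
        = m*‖a0‖^2 - 2*⟪a0,I⟫ - m⁻¹ * ‖v‖^2 := by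
      field_simp
      ring
    rw [e] at key
    have : m⁻¹ * ‖v‖^2 ≤ 0 := by linarith
    nlinarith [inv_pos.2 hm]
  have hveq : v = 0 := by
    have h0 := le_antisymm hv0 (sq_nonneg _)
    have : ‖v‖ = 0 := by nlinarith [norm_nonneg v]
    exact norm_eq_zero.1 this
  rw [hv, sub_eq_zero] at hveq
  exact hveq.symm

variable {n : ℕ} {μ : Measure (EuclideanSpace ℝ (Fin n))} [IsFiniteMeasure μ]

lemma hetero_int_norm (hmom : Integrable (fun x => ‖x‖ ^ 2) μ) :
    Integrable (fun x : EuclideanSpace ℝ (Fin n) => ‖x‖) μ := by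
  refine Integrable.mono' (g := fun x => 1 + ‖x‖^2) ((integrable_const 1).add hmom)
    (Continuous.aestronglyMeasurable (by continuity)) ?_
  filter_upwards with x
  rw [norm_norm]
  nlinarith [norm_nonneg x, sq_nonneg (‖x‖ - 1)]

lemma hetero_int_id (hmom : Integrable (fun x => ‖x‖ ^ 2) μ) :
    Integrable (fun x : EuclideanSpace ℝ (Fin n) => x) μ := by
  refine Integrable.mono' (hetero_int_norm hmom)
    (Continuous.aestronglyMeasurable continuous_id) ?_
  filter_upwards with x using le_rfl

lemma hetero_int_inner (hmom : Integrable (fun x => ‖x‖ ^ 2) μ) (a : EuclideanSpace ℝ (Fin n)) :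
    Integrable (fun x : EuclideanSpace ℝ (Fin n) => ⟪a, x⟫) μ :=
  (innerSL ℝ a).integrable_comp (hetero_int_id hmom)

lemma hetero_int_normsub (hmom : Integrable (fun x => ‖x‖ ^ 2) μ)
    (a : EuclideanSpace ℝ (Fin n)) :
    Integrable (fun x => ‖a - x‖ ^ 2) μ := by
  have h : ∀ x : EuclideanSpace ℝ (Fin n),
      ‖a - x‖ ^ 2 = ‖a‖^2 - 2 * ⟪a, x⟫ + ‖x‖^2 := fun x => norm_sub_sq_real a x
  simp only [h]
  exact ((integrable_const (‖a‖^2)).sub ((hetero_int_inner hmom a).const_mul 2)).add hmom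

lemma hetero_int_min (hmom : Integrable (fun x => ‖x‖ ^ 2) μ) (a b : EuclideanSpace ℝ (Fin n)) :
    Integrable (fun x => min (‖a - x‖ ^ 2) (‖b - x‖ ^ 2)) μ := by
  have h := (hetero_int_normsub hmom a).inf (hetero_int_normsub hmom b)
  have he : (fun x => min (‖a - x‖ ^ 2) (‖b - x‖ ^ 2))
      = ((fun x => ‖a - x‖ ^ 2) ⊓ (fun x => ‖b - x‖ ^ 2)) := by
    funext x; simp [Pi.inf_apply]
  rw [he]; exact h

lemma hetero_setIntegral_normsub (hmom : Integrable (fun x => ‖x‖ ^ 2) μ)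
    (s : Set (EuclideanSpace ℝ (Fin n))) (a : EuclideanSpace ℝ (Fin n)) :
    ∫ x in s, ‖a - x‖ ^ 2 ∂μ =
      (μ s).toReal * ‖a‖^2 - 2 * ⟪a, ∫ x in s, x ∂μ⟫ + ∫ x in s, ‖x‖^2 ∂μ := by
  have h : ∀ x : EuclideanSpace ℝ (Fin n),
      ‖a - x‖ ^ 2 = ‖a‖^2 - 2 * ⟪a, x⟫ + ‖x‖^2 := fun x => norm_sub_sq_real a x
  simp only [h]
  have h1 : Integrable (fun x : EuclideanSpace ℝ (Fin n) => ‖a‖^2 - 2 * ⟪a, x⟫) (μ.restrict s) :=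
    ((integrable_const (‖a‖^2)).sub ((hetero_int_inner hmom a).const_mul 2)).restrict
  have h2 : Integrable (fun x : EuclideanSpace ℝ (Fin n) => ‖x‖^2) (μ.restrict s) :=
    hmom.restrict
  rw [integral_add h1 h2, integral_sub (integrable_const _).restrict
    (((hetero_int_inner hmom a).const_mul 2).restrict), setIntegral_const, measureReal_def, integral_const_mul]
  have h3 : ∫ x in s, ⟪a, x⟫ ∂μ = ⟪a, ∫ x in s, x ∂μ⟫ :=
    integral_inner (hetero_int_id hmom).restrict a
  rw [h3, smul_eq_mul]

lemma hetero_min_split_le (hmom : Integrable (fun x => ‖x‖ ^ 2) μ)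
    (a b : EuclideanSpace ℝ (Fin n)) {s : Set (EuclideanSpace ℝ (Fin n))}
    (hs : MeasurableSet s) :
    ∫ x, min (‖a - x‖ ^ 2) (‖b - x‖ ^ 2) ∂μ ≤
      (∫ x in s, ‖a - x‖ ^ 2 ∂μ) + ∫ x in sᶜ, ‖b - x‖ ^ 2 ∂μ := by
  rw [← integral_add_compl hs (hetero_int_min hmom a b)]
  gcongr ?_ + ?_
  · exact setIntegral_mono_on (hetero_int_min hmom a b).integrableOn
      (hetero_int_normsub hmom a).integrableOn hs (fun x _ => min_le_left _ _)
  · exact setIntegral_mono_on (hetero_int_min hmom a b).integrableOn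
      (hetero_int_normsub hmom b).integrableOn hs.compl (fun x _ => min_le_right _ _)

lemma hetero_vor_meas (a b : EuclideanSpace ℝ (Fin n)) :
    MeasurableSet {x : EuclideanSpace ℝ (Fin n) | ‖a - x‖ < ‖b - x‖} :=
  measurableSet_lt ((continuous_const.sub continuous_id).norm.measurable)
    ((continuous_const.sub continuous_id).norm.measurable)

lemma hetero_min_split_eq (hmom : Integrable (fun x => ‖x‖ ^ 2) μ)
    (a b : EuclideanSpace ℝ (Fin n)) :
    ∫ x, min (‖a - x‖ ^ 2) (‖b - x‖ ^ 2) ∂μ =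
      (∫ x in {x | ‖a - x‖ < ‖b - x‖}, ‖a - x‖ ^ 2 ∂μ) +
        ∫ x in {x | ‖a - x‖ < ‖b - x‖}ᶜ, ‖b - x‖ ^ 2 ∂μ := by
  rw [← integral_add_compl (hetero_vor_meas a b) (hetero_int_min hmom a b)]
  congr 1
  · refine setIntegral_congr_fun (hetero_vor_meas a b) (fun x hx => ?_)
    exact min_eq_left (by
      have : ‖a - x‖ < ‖b - x‖ := hx
      nlinarith [norm_nonneg (a - x), norm_nonneg (b - x)])
  · refine setIntegral_congr_fun (hetero_vor_meas a b).compl (fun x hx => ?_)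
    have : ‖b - x‖ ≤ ‖a - x‖ := not_lt.1 hx
    exact min_eq_right (by nlinarith [norm_nonneg (a - x), norm_nonneg (b - x)])

/-- Parallel axis theorem: recentering at the centroid decreases the quadratic cost. -/
lemma hetero_centroid_paxis (hmom : Integrable (fun x => ‖x‖ ^ 2) μ)
    {s : Set (EuclideanSpace ℝ (Fin n))} (hμs : 0 < μ s)
    (p : EuclideanSpace ℝ (Fin n)) :
    ∫ x in s, ‖((μ s).toReal⁻¹ • ∫ x in s, x ∂μ) - x‖ ^ 2 ∂μ =
      (∫ x in s, ‖p - x‖ ^ 2 ∂μ) -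
        (μ s).toReal * ‖p - (μ s).toReal⁻¹ • ∫ x in s, x ∂μ‖ ^ 2 := by
  set m := (μ s).toReal with hm
  set I := ∫ x in s, x ∂μ with hIdef
  set c := m⁻¹ • I with hc
  have hmpos : 0 < m := ENNReal.toReal_pos hμs.ne' (measure_ne_top μ s)
  have hI : I = m • c := by
    rw [hc, smul_smul, mul_inv_cancel₀ hmpos.ne', one_smul]
  rw [hetero_setIntegral_normsub hmom s c, hetero_setIntegral_normsub hmom s p]
  have h1 : ⟪c, I⟫ = m * ‖c‖^2 := by
    rw [hI, real_inner_smul_right, real_inner_self_eq_norm_sq]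
  have h2 : ⟪p, I⟫ = m * ⟪p, c⟫ := by rw [hI, real_inner_smul_right]
  have h3 : ‖p - c‖^2 = ‖p‖^2 - 2*⟪p,c⟫ + ‖c‖^2 := norm_sub_sq_real p c
  rw [h1, h2, h3]
  ring

lemma hetero_centroid_of_min (hmom : Integrable (fun x => ‖x‖ ^ 2) μ)
    {s : Set (EuclideanSpace ℝ (Fin n))} (hμs : 0 < μ s)
    {a0 : EuclideanSpace ℝ (Fin n)}
    (h : ∀ a, ∫ x in s, ‖a0 - x‖ ^ 2 ∂μ ≤ ∫ x in s, ‖a - x‖ ^ 2 ∂μ) :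
    (μ s).toReal • a0 = ∫ x in s, x ∂μ := by
  have hmpos : 0 < (μ s).toReal := ENNReal.toReal_pos hμs.ne' (measure_ne_top μ s)
  refine hetero_quad_min hmpos (fun a => ?_)
  have hh := h a
  rw [hetero_setIntegral_normsub hmom s a0, hetero_setIntegral_normsub hmom s a] at hh
  linarith

end Helpers

section Improve

variable {n : ℕ} {μ : Measure (EuclideanSpace ℝ (Fin n))} [IsProbabilityMeasure μ]

/-- Splitting the mass along a hyperplane and placing points at the two centroids
strictly beats every single-point quantizer. -/
lemma hetero_improve (hn : 1 ≤ n) (hac : μ ≪ volume)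
    (hmom : Integrable (fun x => ‖x‖ ^ 2) μ) :
    ∃ a b : EuclideanSpace ℝ (Fin n), ∀ p : EuclideanSpace ℝ (Fin n),
      ∫ x, min (‖a - x‖ ^ 2) (‖b - x‖ ^ 2) ∂μ < ∫ x, ‖p - x‖ ^ 2 ∂μ := by
  have i0 : Fin n := ⟨0, hn⟩
  set v : EuclideanSpace ℝ (Fin n) := EuclideanSpace.single i0 (1:ℝ) with hvdef
  have hv : v ≠ 0 := by
    intro h
    have := congrArg (fun w : EuclideanSpace ℝ (Fin n) => w i0) h
    simp [hvdef, EuclideanSpace.single_apply] at this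
  have hproj : ∀ x : EuclideanSpace ℝ (Fin n), ⟪v, x⟫ = x i0 := by
    intro x; simp [hvdef, EuclideanSpace.inner_single_left]
  have mmeas : Measurable (fun x : EuclideanSpace ℝ (Fin n) => x i0) :=
    (EuclideanSpace.proj i0).continuous.measurable
  set ν : Measure ℝ := μ.map (fun x => x i0) with hνdef
  have : IsProbabilityMeasure ν := Measure.isProbabilityMeasure_map mmeas.aemeasurable
  have hν : ∀ t : ℝ, ν {t} = 0 := by
    intro t
    rw [hνdef, Measure.map_apply mmeas (measurableSet_singleton t)]
    refine hac ?_
    have hpre : (fun x : EuclideanSpace ℝ (Fin n) => x i0) ⁻¹' {t} = {x | ⟪v, x⟫ = t} := by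
      ext x; simp [hproj]
    rw [hpre]
    exact hetero_hyp_null v hv t
  obtain ⟨t, h1, h2⟩ := hetero_exists_split ν hν
  set S : Set (EuclideanSpace ℝ (Fin n)) := {x | x i0 < t} with hSdef
  have hSmeas : MeasurableSet S := measurableSet_lt mmeas measurable_const
  have hμS : μ S = ν (Iio t) := by
    rw [hνdef, Measure.map_apply mmeas measurableSet_Iio]; rfl
  have hμS' : 0 < μ S := hμS ▸ h1
  have hμSc : 0 < μ Sᶜ := by
    have he : μ {x : EuclideanSpace ℝ (Fin n) | t < x i0} = ν (Ioi t) := by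
      rw [hνdef, Measure.map_apply mmeas measurableSet_Ioi]; rfl
    refine lt_of_lt_of_le ?_ (measure_mono (s := {x : EuclideanSpace ℝ (Fin n) | t < x i0}) ?_)
    · rw [he]; exact h2
    · intro x hx
      simp only [hSdef, mem_compl_iff, mem_setOf_eq, not_lt]
      exact (le_of_lt hx)
  set m₁ := (μ S).toReal with hm₁
  set m₂ := (μ Sᶜ).toReal with hm₂
  have hm₁pos : 0 < m₁ := ENNReal.toReal_pos hμS'.ne' (measure_ne_top μ S)
  have hm₂pos : 0 < m₂ := ENNReal.toReal_pos hμSc.ne' (measure_ne_top μ Sᶜ)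
  set c₁ : EuclideanSpace ℝ (Fin n) := m₁⁻¹ • ∫ x in S, x ∂μ with hc₁
  set c₂ : EuclideanSpace ℝ (Fin n) := m₂⁻¹ • ∫ x in Sᶜ, x ∂μ with hc₂
  have hcoord : ∀ s : Set (EuclideanSpace ℝ (Fin n)),
      (∫ x in s, x ∂μ) i0 = ∫ x in s, x i0 ∂μ := by
    intro s
    exact ((EuclideanSpace.proj i0).integral_comp_comm (hetero_int_id hmom).restrict).symm
  have hinti0 : Integrable (fun x : EuclideanSpace ℝ (Fin n) => x i0) μ :=
    (EuclideanSpace.proj (𝕜 := ℝ) i0).integrable_comp (hetero_int_id hmom)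
  have hc1lt : c₁ i0 < t := by
    have hpos : 0 < ∫ x in S, (t - x i0) ∂μ := by
      rw [setIntegral_pos_iff_support_of_nonneg_ae]
      · refine lt_of_lt_of_le hμS' (measure_mono ?_)
        refine subset_inter (fun x hx => ?_) subset_rfl
        have : x i0 < t := hx
        simp only [Function.mem_support]
        intro h; rw [sub_eq_zero] at h; exact absurd h.symm this.ne
      · filter_upwards [ae_restrict_mem hSmeas] with x hx
        have : x i0 < t := hx
        simpa using this.le
      · exact ((integrable_const t).sub hinti0).integrableOn
    have hsub : ∫ x in S, (t - x i0) ∂μ = t * m₁ - ∫ x in S, x i0 ∂μ := by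
      rw [integral_sub (integrable_const t).restrict hinti0.restrict, setIntegral_const,
        smul_eq_mul, hm₁, measureReal_def]
      ring
    have hlt : ∫ x in S, x i0 ∂μ < t * m₁ := by rw [hsub] at hpos; linarith
    have hval : c₁ i0 = m₁⁻¹ * ∫ x in S, x i0 ∂μ := by
      rw [hc₁, ← hcoord]; rfl
    rw [hval]
    calc m₁⁻¹ * ∫ x in S, x i0 ∂μ < m₁⁻¹ * (t * m₁) :=
          mul_lt_mul_of_pos_left hlt (inv_pos.2 hm₁pos)
      _ = t := by field_simp
  have hc2ge : t ≤ c₂ i0 := by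
    have hle : t * m₂ ≤ ∫ x in Sᶜ, x i0 ∂μ := by
      have := setIntegral_mono_on (f := fun _ => t)
        (g := fun x : EuclideanSpace ℝ (Fin n) => x i0)
        (integrable_const t).integrableOn hinti0.integrableOn hSmeas.compl
        (fun x hx => not_lt.1 hx)
      rw [setIntegral_const, smul_eq_mul, measureReal_def] at this
      rw [hm₂]
      linarith
    have hval : c₂ i0 = m₂⁻¹ * ∫ x in Sᶜ, x i0 ∂μ := by
      rw [hc₂, ← hcoord]; rfl
    rw [hval]
    calc t = m₂⁻¹ * (t * m₂) := by field_simp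
      _ ≤ m₂⁻¹ * ∫ x in Sᶜ, x i0 ∂μ := mul_le_mul_of_nonneg_left hle (inv_pos.2 hm₂pos).le
  have hcne : c₁ ≠ c₂ := by
    intro h
    rw [h] at hc1lt
    linarith
  refine ⟨c₁, c₂, fun p => ?_⟩
  have key : ∫ x, min (‖c₁ - x‖ ^ 2) (‖c₂ - x‖ ^ 2) ∂μ ≤
      (∫ x, ‖p - x‖ ^ 2 ∂μ) - (m₁ * ‖p - c₁‖^2 + m₂ * ‖p - c₂‖^2) := by
    calc ∫ x, min (‖c₁ - x‖ ^ 2) (‖c₂ - x‖ ^ 2) ∂μ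
        ≤ (∫ x in S, ‖c₁ - x‖ ^ 2 ∂μ) + ∫ x in Sᶜ, ‖c₂ - x‖ ^ 2 ∂μ :=
          hetero_min_split_le hmom c₁ c₂ hSmeas
      _ = ((∫ x in S, ‖p - x‖ ^ 2 ∂μ) - m₁ * ‖p - c₁‖^2) +
          ((∫ x in Sᶜ, ‖p - x‖ ^ 2 ∂μ) - m₂ * ‖p - c₂‖^2) := by
          rw [hetero_centroid_paxis hmom hμS' p, hetero_centroid_paxis hmom hμSc p]
      _ = (∫ x, ‖p - x‖ ^ 2 ∂μ) - (m₁ * ‖p - c₁‖^2 + m₂ * ‖p - c₂‖^2) := by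
          have hsplit : ∫ x, ‖p - x‖ ^ 2 ∂μ =
              (∫ x in S, ‖p - x‖ ^ 2 ∂μ) + ∫ x in Sᶜ, ‖p - x‖ ^ 2 ∂μ :=
            (integral_add_compl hSmeas (hetero_int_normsub hmom p)).symm
          rw [hsplit]; ring
  have hposterm : 0 < m₁ * ‖p - c₁‖^2 + m₂ * ‖p - c₂‖^2 := by
    rcases eq_or_ne p c₁ with rfl | hpc
    · have h2 : 0 < ‖c₁ - c₂‖ := norm_pos_iff.2 (sub_ne_zero.2 hcne)
      nlinarith [mul_pos hm₂pos (pow_pos h2 2), mul_nonneg hm₁pos.le (sq_nonneg ‖c₁ - c₁‖)]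
    · have h1 : 0 < ‖p - c₁‖ := norm_pos_iff.2 (sub_ne_zero.2 hpc)
      nlinarith [mul_pos hm₁pos (pow_pos h1 2), mul_nonneg hm₂pos.le (sq_nonneg ‖p - c₂‖)]
  linarith

end Improve

/-- **Necessary conditions for global heterarchical minimizers.**
Every global minimizer `(a*, b*)` of the two-estimator cost satisfies `a* ≠ b*`,
both Voronoi regions have positive measure, and each estimator is the centroid of
its own Voronoi region. -/
theorem heterarchical_minimizer_is_centroidal
    (n : ℕ) (hn : 1 ≤ n)
    (μ : Measure (EuclideanSpace ℝ (Fin n))) [IsProbabilityMeasure μ]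
    (hac : μ ≪ volume)
    (hmom : Integrable (fun x => ‖x‖ ^ 2) μ)
    (astar bstar : EuclideanSpace ℝ (Fin n))
    (hmin : ∀ a b : EuclideanSpace ℝ (Fin n),
        ∫ x, min (‖astar - x‖ ^ 2) (‖bstar - x‖ ^ 2) ∂μ ≤
          ∫ x, min (‖a - x‖ ^ 2) (‖b - x‖ ^ 2) ∂μ) :
    astar ≠ bstar ∧
      0 < μ {x | ‖astar - x‖ < ‖bstar - x‖} ∧
      0 < μ {x | ‖bstar - x‖ < ‖astar - x‖} ∧
      (μ {x | ‖astar - x‖ < ‖bstar - x‖}).toReal • astar =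
        ∫ x in {x | ‖astar - x‖ < ‖bstar - x‖}, x ∂μ ∧
      (μ {x | ‖bstar - x‖ < ‖astar - x‖}).toReal • bstar =
        ∫ x in {x | ‖bstar - x‖ < ‖astar - x‖}, x ∂μ := by
  obtain ⟨a, b, himp⟩ := hetero_improve hn hac hmom
  have hkey : ∀ p, ∫ x, min (‖astar - x‖^2) (‖bstar - x‖^2) ∂μ < ∫ x, ‖p - x‖^2 ∂μ :=
    fun p => lt_of_le_of_lt (hmin a b) (himp p)
  have hcomm : ∫ x, min (‖astar - x‖^2) (‖bstar - x‖^2) ∂μ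
      = ∫ x, min (‖bstar - x‖^2) (‖astar - x‖^2) ∂μ := by
    simp_rw [min_comm]
  -- a* ≠ b*
  have hne : astar ≠ bstar := by
    intro h
    have hx := hkey astar
    rw [show (fun x => min (‖astar - x‖^2) (‖bstar - x‖^2)) = fun x => ‖astar - x‖^2 from
      funext fun x => by rw [← h, min_self]] at hx
    exact lt_irrefl _ hx
  -- positive Voronoi measures
  have hV1pos : 0 < μ {x | ‖astar - x‖ < ‖bstar - x‖} := by
    by_contra h
    push_neg at h
    have h0 : μ {x | ‖astar - x‖ < ‖bstar - x‖} = 0 := le_antisymm h (zero_le)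
    have hr : μ.restrict {x | ‖astar - x‖ < ‖bstar - x‖} = 0 := Measure.restrict_eq_zero.2 h0
    have heq : ∫ x, min (‖astar - x‖^2) (‖bstar - x‖^2) ∂μ = ∫ x, ‖bstar - x‖^2 ∂μ := by
      rw [hetero_min_split_eq hmom astar bstar]
      have hz1 : (∫ x in {x | ‖astar - x‖ < ‖bstar - x‖}, ‖astar - x‖^2 ∂μ) = 0 := by
        rw [hr, integral_zero_measure]
      have hz2 : (∫ x in {x | ‖astar - x‖ < ‖bstar - x‖}, ‖bstar - x‖^2 ∂μ) = 0 := by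
        rw [hr, integral_zero_measure]
      have hadd := integral_add_compl (hetero_vor_meas astar bstar)
        (hetero_int_normsub hmom bstar)
      rw [hz1, hz2] at *
      linarith
    have := hkey bstar
    rw [heq] at this
    exact lt_irrefl _ this
  have hV2pos : 0 < μ {x | ‖bstar - x‖ < ‖astar - x‖} := by
    by_contra h
    push_neg at h
    have h0 : μ {x | ‖bstar - x‖ < ‖astar - x‖} = 0 := le_antisymm h (zero_le)
    have hr : μ.restrict {x | ‖bstar - x‖ < ‖astar - x‖} = 0 := Measure.restrict_eq_zero.2 h0
    have heq : ∫ x, min (‖astar - x‖^2) (‖bstar - x‖^2) ∂μ = ∫ x, ‖astar - x‖^2 ∂μ := by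
      rw [hcomm, hetero_min_split_eq hmom bstar astar]
      have hz1 : (∫ x in {x | ‖bstar - x‖ < ‖astar - x‖}, ‖bstar - x‖^2 ∂μ) = 0 := by
        rw [hr, integral_zero_measure]
      have hz2 : (∫ x in {x | ‖bstar - x‖ < ‖astar - x‖}, ‖astar - x‖^2 ∂μ) = 0 := by
        rw [hr, integral_zero_measure]
      have hadd := integral_add_compl (hetero_vor_meas bstar astar)
        (hetero_int_normsub hmom astar)
      rw [hz1, hz2] at *
      linarith
    have := hkey astar
    rw [heq] at this
    exact lt_irrefl _ this
  -- centroid conditions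
  have hφa : ∀ c, ∫ x in {x | ‖astar - x‖ < ‖bstar - x‖}, ‖astar - x‖^2 ∂μ ≤
      ∫ x in {x | ‖astar - x‖ < ‖bstar - x‖}, ‖c - x‖^2 ∂μ := by
    intro c
    have h1 := hmin c bstar
    have h2 := hetero_min_split_le hmom c bstar (hetero_vor_meas astar bstar)
    have h3 := hetero_min_split_eq hmom astar bstar
    linarith
  have hφb : ∀ c, ∫ x in {x | ‖bstar - x‖ < ‖astar - x‖}, ‖bstar - x‖^2 ∂μ ≤
      ∫ x in {x | ‖bstar - x‖ < ‖astar - x‖}, ‖c - x‖^2 ∂μ := by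
    intro c
    have h1 := hmin astar c
    have hcomm2 : ∫ x, min (‖astar - x‖^2) (‖c - x‖^2) ∂μ
        = ∫ x, min (‖c - x‖^2) (‖astar - x‖^2) ∂μ := by
      simp_rw [min_comm]
    have h2 := hetero_min_split_le hmom c astar (hetero_vor_meas bstar astar)
    have h3 := hetero_min_split_eq hmom bstar astar
    rw [← hcomm] at h3
    linarith
  exact ⟨hne, hV1pos, hV2pos,
    hetero_centroid_of_min hmom hV1pos hφa,
    hetero_centroid_of_min hmom hV2pos hφb⟩
end

section
/- There exists b* ∈ ℝⁿ minimizing the constrained (hierarchical) cost, i.e. J(m, b*) ≤ J(m, b) for all b ∈ ℝⁿ, with J(m, b*) < J_MS; moreover every such minimizer b* satisfies b* ≠ m, μ(V₂(m, b*)) > 0, and b* · μ(V₂(m, b*)) = ∫_{V₂(m, b*)} x dμ(x). -/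
open MeasureTheory Filter Set Metric RealInnerProductSpace Topology

namespace HierarchicalAux

variable {n : ℕ}

local notation "E" => EuclideanSpace ℝ (Fin n)

lemma sq_lt_of_norm_lt {a b : ℝ} (ha : 0 ≤ a) (h : a < b) : a ^ 2 < b ^ 2 := by nlinarith

lemma sq_le_of_norm_le {a b : ℝ} (ha : 0 ≤ a) (h : a ≤ b) : a ^ 2 ≤ b ^ 2 := by nlinarith

lemma integ_id {μ : Measure E} [IsProbabilityMeasure μ]
    (hmom : Integrable (fun x : E => ‖x‖ ^ 2) μ) : Integrable (fun x : E => x) μ := by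
  refine Integrable.mono' ((integrable_const (1:ℝ)).add hmom) aestronglyMeasurable_id ?_
  filter_upwards with x
  simp only [Pi.add_apply]
  by_cases h : ‖(x : E)‖ ≤ 1 <;> nlinarith [norm_nonneg (x : E)]

lemma integ_sq {μ : Measure E} [IsProbabilityMeasure μ]
    (hmom : Integrable (fun x : E => ‖x‖ ^ 2) μ) (a : E) :
    Integrable (fun x : E => ‖a - x‖ ^ 2) μ := by
  refine Integrable.mono' ((integrable_const (2 * ‖a‖^2)).add (hmom.const_mul 2))
    (((continuous_const.sub continuous_id).norm.pow 2).aestronglyMeasurable) ?_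
  filter_upwards with x
  have h1 : ‖a - x‖ ≤ ‖a‖ + ‖x‖ := norm_sub_le a x
  have h2 : (0:ℝ) ≤ ‖a - x‖ := norm_nonneg _
  rw [Real.norm_eq_abs, abs_of_nonneg (by positivity)]
  simp only [Pi.add_apply]
  nlinarith [sq_le_of_norm_le h2 h1, sq_nonneg (‖a‖ - ‖(x:E)‖)]

lemma integ_min {μ : Measure E} [IsProbabilityMeasure μ]
    (hmom : Integrable (fun x : E => ‖x‖ ^ 2) μ) (a b : E) :
    Integrable (fun x : E => min (‖a - x‖ ^ 2) (‖b - x‖ ^ 2)) μ := by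
  refine Integrable.mono' (integ_sq hmom a)
    ((((continuous_const.sub continuous_id).norm.pow 2).min
      ((continuous_const.sub continuous_id).norm.pow 2)).aestronglyMeasurable) ?_
  filter_upwards with x
  rw [Real.norm_eq_abs, abs_of_nonneg (le_min (by positivity) (by positivity))]
  exact min_le_left _ _

lemma hyperplane_null {μ : Measure E} (hac : μ ≪ volume) (m u : E) (hu : u ≠ 0) :
    μ {x : E | ⟪u, x - m⟫ = 0} = 0 := by
  apply hac
  have hK : (LinearMap.ker (innerSL ℝ u).toLinearMap : Submodule ℝ E) ≠ ⊤ := by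
    intro h
    have hm : u ∈ LinearMap.ker (innerSL ℝ u).toLinearMap := h.symm ▸ Submodule.mem_top
    rw [LinearMap.mem_ker] at hm
    exact hu (inner_self_eq_zero.mp hm)
  have hS : {x : E | ⟪u, x - m⟫ = 0} =
      (AffineSubspace.mk' m (LinearMap.ker (innerSL ℝ u).toLinearMap) : Set E) := by
    ext x
    simp [AffineSubspace.mem_mk', LinearMap.mem_ker, vsub_eq_sub]
  rw [hS]
  refine Measure.addHaar_affineSubspace _ _ ?_
  intro h
  apply hK
  rw [← AffineSubspace.direction_mk' m (LinearMap.ker (innerSL ℝ u).toLinearMap), h,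
    AffineSubspace.direction_top]

lemma exists_good_b {μ : Measure E} [IsProbabilityMeasure μ] (hac : μ ≪ volume)
    (hn : 1 ≤ n) (m : E) :
    ∃ b : E, 0 < μ {x : E | ‖b - x‖ < ‖m - x‖} := by
  by_contra hcon
  push_neg at hcon
  have hzero : ∀ b : E, μ {x : E | ‖b - x‖ < ‖m - x‖} = 0 :=
    fun b => le_antisymm (hcon b) zero_le
  set u : E := EuclideanSpace.single (⟨0, hn⟩ : Fin n) (1:ℝ) with hu_def
  have hu1 : ‖u‖ = 1 := by simp [hu_def, EuclideanSpace.norm_single]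
  have hu0 : u ≠ 0 := by intro h; rw [h] at hu1; simp at hu1
  have key : ∀ (v : E) (ε : ℝ), 0 < ε → ‖v‖ = 1 →
      {x : E | ε < ⟪v, x - m⟫} ⊆ {x : E | ‖(m + ε • v) - x‖ < ‖m - x‖} := by
    intro v ε hε hv x hx
    simp only [mem_setOf_eq] at hx ⊢
    by_contra hcon2
    push_neg at hcon2
    have hle := sq_le_of_norm_le (norm_nonneg (m - x)) hcon2
    have hexp : ‖(m + ε • v) - x‖^2 = ‖m - x‖^2 + 2 * (ε * ⟪m - x, v⟫) + ε^2 := by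
      have h9 : (m + ε • v) - x = (m - x) + ε • v := by abel
      rw [h9, norm_add_sq_real, real_inner_smul_right, norm_smul]
      simp [hv, abs_of_pos hε]
    rw [hexp] at hle
    have h3 : ⟪m - x, v⟫ = - ⟪v, x - m⟫ := by
      rw [real_inner_comm, show m - x = -(x - m) by abel, inner_neg_right]
    rw [h3] at hle
    nlinarith [mul_lt_mul_of_pos_left hx hε]
  have hUnion : ∀ v : E, {x : E | 0 < ⟪v, x - m⟫} =
      ⋃ k : ℕ, {x : E | 1/(k+1) < ⟪v, x - m⟫} := by
    intro v; ext x; simp only [mem_iUnion, mem_setOf_eq]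
    constructor
    · intro hx
      obtain ⟨k, hk⟩ := exists_nat_gt (1 / ⟪v, x - m⟫)
      refine ⟨k, ?_⟩
      rw [div_lt_iff₀ hx] at hk
      rw [div_lt_iff₀ (by positivity)]
      nlinarith
    · rintro ⟨k, hk⟩
      have hp : (0:ℝ) < 1/((k:ℝ)+1) := by positivity
      linarith
  have hhalf : ∀ v : E, ‖v‖ = 1 → μ {x : E | 0 < ⟪v, x - m⟫} = 0 := by
    intro v hv
    rw [hUnion v]
    refine measure_iUnion_null fun k => ?_
    refine measure_mono_null ?_ (hzero (m + (1/((k:ℝ)+1)) • v))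
    exact key v _ (by positivity) hv
  have h1 := hhalf u hu1
  have h2 := hhalf (-u) (by rw [norm_neg]; exact hu1)
  have h0 := hyperplane_null hac m u hu0
  have hcover : (univ : Set E) ⊆ {x : E | ⟪u, x - m⟫ = 0} ∪
      ({x : E | 0 < ⟪u, x - m⟫} ∪ {x : E | 0 < ⟪-u, x - m⟫}) := by
    intro x _
    rcases lt_trichotomy (⟪u, x - m⟫) 0 with h|h|h
    · right; right; simp only [mem_setOf_eq, inner_neg_left]; linarith
    · left; exact h
    · right; left; exact h
  have huniv : μ (univ : Set E) = 0 :=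
    measure_mono_null hcover (measure_union_null h0 (measure_union_null h1 h2))
  simp [measure_univ] at huniv

lemma measurable_V (m b : E) : MeasurableSet {x : E | ‖b - x‖ < ‖m - x‖} :=
  measurableSet_lt ((continuous_const.sub continuous_id).norm.measurable)
    ((continuous_const.sub continuous_id).norm.measurable)

lemma J_lt_of_pos {μ : Measure E} [IsProbabilityMeasure μ]
    (hmom : Integrable (fun x : E => ‖x‖ ^ 2) μ) (m b : E)
    (hV : 0 < μ {x : E | ‖b - x‖ < ‖m - x‖}) :
    ∫ x, min (‖m - x‖ ^ 2) (‖b - x‖ ^ 2) ∂μ < ∫ x, ‖m - x‖ ^ 2 ∂μ := by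
  have hint := integ_min hmom m b
  have hsq := integ_sq hmom m
  have hg : Integrable
      (fun x : E => ‖m - x‖^2 - min (‖m - x‖^2) (‖b - x‖^2)) μ := hsq.sub hint
  have hpos : 0 < ∫ x, (‖m - x‖^2 - min (‖m - x‖^2) (‖b - x‖^2)) ∂μ := by
    rw [integral_pos_iff_support_of_nonneg_ae
      (Eventually.of_forall fun x => sub_nonneg.2 (min_le_left _ _)) hg]
    refine hV.trans_le (measure_mono ?_)
    intro x hx
    simp only [mem_setOf_eq] at hx
    have h1 : ‖b - x‖^2 < ‖m - x‖^2 := sq_lt_of_norm_lt (norm_nonneg _) hx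
    have h2 : min (‖m - x‖^2) (‖b - x‖^2) ≤ ‖b - x‖^2 := min_le_right _ _
    simp only [Function.mem_support]
    intro hzero
    nlinarith
  rw [integral_sub hsq hint] at hpos
  linarith

lemma J_eq_of_zero {μ : Measure E} [IsProbabilityMeasure μ] (m b : E)
    (hV : μ {x : E | ‖b - x‖ < ‖m - x‖} = 0) :
    ∫ x, min (‖m - x‖ ^ 2) (‖b - x‖ ^ 2) ∂μ = ∫ x, ‖m - x‖ ^ 2 ∂μ := by
  refine integral_congr_ae ?_
  have hco : ∀ᵐ x ∂μ, x ∉ {x : E | ‖b - x‖ < ‖m - x‖} :=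
    measure_eq_zero_iff_ae_notMem.mp hV
  filter_upwards [hco] with x hx
  simp only [mem_setOf_eq, not_lt] at hx
  exact min_eq_left (sq_le_of_norm_le (norm_nonneg _) hx)

lemma J_lower {μ : Measure E} [IsProbabilityMeasure μ]
    (hmom : Integrable (fun x : E => ‖x‖ ^ 2) μ) (m b : E) (r : ℝ) (hr : 0 ≤ r)
    (hb : 2*r ≤ ‖b - m‖) :
    ∫ x in closedBall m r, ‖m - x‖^2 ∂μ ≤
      ∫ x, min (‖m - x‖ ^ 2) (‖b - x‖ ^ 2) ∂μ := by
  have heq : ∫ x in closedBall m r, ‖m - x‖^2 ∂μ =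
      ∫ x in closedBall m r, min (‖m - x‖ ^ 2) (‖b - x‖ ^ 2) ∂μ := by
    refine setIntegral_congr_fun measurableSet_closedBall fun x hx => ?_
    have hxm : ‖m - x‖ ≤ r := by
      rw [mem_closedBall, dist_eq_norm] at hx
      rw [norm_sub_rev]; exact hx
    have h3 : ‖b - m‖ ≤ ‖b - x‖ + ‖x - m‖ := norm_sub_le_norm_sub_add_norm_sub b x m
    have hbx : ‖m - x‖ ≤ ‖b - x‖ := by
      rw [norm_sub_rev] at hxm; linarith [hxm, h3, hb, (norm_sub_rev x m) ▸ hxm]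
    exact (min_eq_left (sq_le_of_norm_le (norm_nonneg _) hbx)).symm
  rw [heq]
  exact setIntegral_le_integral (integ_min hmom m b)
    (Eventually.of_forall fun x => le_min (by positivity) (by positivity))

lemma J_cont {μ : Measure E} [IsProbabilityMeasure μ]
    (hmom : Integrable (fun x : E => ‖x‖ ^ 2) μ) (m : E) :
    Continuous fun b : E => ∫ x, min (‖m - x‖ ^ 2) (‖b - x‖ ^ 2) ∂μ := by
  rw [continuous_iff_continuousAt]; intro b0
  apply continuousAt_of_dominated (bound := fun x : E => ‖m - x‖^2)
  · exact Eventually.of_forall fun b =>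
      ((((continuous_const.sub continuous_id).norm.pow 2).min
        ((continuous_const.sub continuous_id).norm.pow 2)).aestronglyMeasurable)
  · refine Eventually.of_forall fun b => Eventually.of_forall fun x => ?_
    rw [Real.norm_eq_abs, abs_of_nonneg (le_min (by positivity) (by positivity))]
    exact min_le_left _ _
  · exact integ_sq hmom m
  · exact Eventually.of_forall fun x =>
      (continuous_const.min
        (((continuous_id.sub continuous_const).norm.pow 2))).continuousAt

lemma J_decomp {μ : Measure E} [IsProbabilityMeasure μ]
    (hmom : Integrable (fun x : E => ‖x‖ ^ 2) μ) (m b : E) :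
    ∫ x, min (‖m - x‖ ^ 2) (‖b - x‖ ^ 2) ∂μ =
      (∫ x in {x : E | ‖b - x‖ < ‖m - x‖}, ‖b - x‖^2 ∂μ) +
      ∫ x in {x : E | ‖b - x‖ < ‖m - x‖}ᶜ, ‖m - x‖^2 ∂μ := by
  rw [← integral_add_compl (measurable_V m b) (integ_min hmom m b)]
  congr 1
  · refine setIntegral_congr_fun (measurable_V m b) fun x hx => ?_
    exact min_eq_right (le_of_lt (sq_lt_of_norm_lt (norm_nonneg _) hx))
  · refine setIntegral_congr_fun (measurable_V m b).compl fun x hx => ?_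
    simp only [mem_compl_iff, mem_setOf_eq, not_lt] at hx
    exact min_eq_left (sq_le_of_norm_le (norm_nonneg _) hx)

lemma J_le_decomp {μ : Measure E} [IsProbabilityMeasure μ]
    (hmom : Integrable (fun x : E => ‖x‖ ^ 2) μ) (m c : E) (V : Set E)
    (hVm : MeasurableSet V) :
    ∫ x, min (‖m - x‖ ^ 2) (‖c - x‖ ^ 2) ∂μ ≤
      (∫ x in V, ‖c - x‖^2 ∂μ) + ∫ x in Vᶜ, ‖m - x‖^2 ∂μ := by
  rw [← integral_add_compl hVm (integ_min hmom m c)]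
  refine add_le_add ?_ ?_
  · exact setIntegral_mono_on (integ_min hmom m c).integrableOn
      (integ_sq hmom c).integrableOn hVm (fun x _ => min_le_right _ _)
  · exact setIntegral_mono_on (integ_min hmom m c).integrableOn
      (integ_sq hmom m).integrableOn hVm.compl (fun x _ => min_le_left _ _)

lemma parallel_axis {μ : Measure E} [IsProbabilityMeasure μ]
    (hmom : Integrable (fun x : E => ‖x‖ ^ 2) μ) (V : Set E) (c b : E)
    (hc : (μ V).toReal • c = ∫ x in V, x ∂μ) :
    ∫ x in V, ‖b - x‖^2 ∂μ =
      (∫ x in V, ‖c - x‖^2 ∂μ) + (μ V).toReal * ‖b - c‖^2 := by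
  have hxV : Integrable (fun x : E => x) (μ.restrict V) := (integ_id hmom).restrict
  have hcx : Integrable (fun x : E => c - x) (μ.restrict V) := (integrable_const c).sub hxV
  have hinner : Integrable (fun x : E => ⟪b - c, c - x⟫) (μ.restrict V) := hcx.const_inner _
  have hsq : Integrable (fun x : E => ‖c - x‖^2) (μ.restrict V) := (integ_sq hmom c).restrict
  have hzero : ∫ x in V, (c - x) ∂μ = 0 := by
    rw [integral_sub (integrable_const c) hxV, integral_const, ← hc]
    simp [Measure.restrict_apply_univ, Measure.real]
  have key : (fun x : E => ‖b - x‖^2) =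
      fun x : E => ‖c - x‖^2 + (2 * ⟪b - c, c - x⟫ + ‖b - c‖^2) := by
    funext x
    have h9 : b - x = (b - c) + (c - x) := by abel
    rw [h9, norm_add_sq_real]; ring
  have hg2 : Integrable (fun x : E => 2 * ⟪b - c, c - x⟫ + ‖b - c‖^2) (μ.restrict V) := by
    exact (hinner.const_mul 2).add (integrable_const _)
  rw [key, integral_add hsq hg2,
    integral_add (hinner.const_mul 2) (integrable_const _),
    integral_const_mul, integral_inner hcx, hzero, integral_const]
  simp [Measure.restrict_apply_univ, smul_eq_mul, Measure.real]

end HierarchicalAux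


open HierarchicalAux

/-- **Existence and characterization of the optimal hierarchical estimator.**
With the first estimator fixed at the mean `m = ∫ x dμ`, there exists `b*`
minimizing `b ↦ J(m, b)`, with minimal cost strictly below the MMSE `J_MS`;
moreover every such minimizer satisfies `b* ≠ m`, its Voronoi region has
positive measure, and `b*` is the centroid of its Voronoi region. -/
theorem hierarchical_global_min_exists_and_centroidal
    (n : ℕ) (hn : 1 ≤ n)
    (μ : Measure (EuclideanSpace ℝ (Fin n))) [IsProbabilityMeasure μ]
    (hac : μ ≪ volume)
    (hmom : Integrable (fun x => ‖x‖ ^ 2) μ)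
    (m : EuclideanSpace ℝ (Fin n)) (hm : m = ∫ x, x ∂μ) :
    (∃ bstar : EuclideanSpace ℝ (Fin n),
      (∀ b : EuclideanSpace ℝ (Fin n),
          ∫ x, min (‖m - x‖ ^ 2) (‖bstar - x‖ ^ 2) ∂μ ≤
            ∫ x, min (‖m - x‖ ^ 2) (‖b - x‖ ^ 2) ∂μ) ∧
      ∫ x, min (‖m - x‖ ^ 2) (‖bstar - x‖ ^ 2) ∂μ < ∫ x, ‖x - m‖ ^ 2 ∂μ) ∧
    (∀ bstar : EuclideanSpace ℝ (Fin n),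
      (∀ b : EuclideanSpace ℝ (Fin n),
          ∫ x, min (‖m - x‖ ^ 2) (‖bstar - x‖ ^ 2) ∂μ ≤
            ∫ x, min (‖m - x‖ ^ 2) (‖b - x‖ ^ 2) ∂μ) →
        bstar ≠ m ∧
        0 < μ {x | ‖bstar - x‖ < ‖m - x‖} ∧
        (μ {x | ‖bstar - x‖ < ‖m - x‖}).toReal • bstar =
          ∫ x in {x | ‖bstar - x‖ < ‖m - x‖}, x ∂μ) := by
  classical
  have hMS : ∫ x, ‖x - m‖ ^ 2 ∂μ = ∫ x, ‖m - x‖ ^ 2 ∂μ :=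
    integral_congr_ae (Eventually.of_forall fun x => by simp [norm_sub_rev])
  obtain ⟨b0, hb0⟩ := exists_good_b hac hn m
  have hb0lt : ∫ x, min (‖m - x‖ ^ 2) (‖b0 - x‖ ^ 2) ∂μ < ∫ x, ‖m - x‖ ^ 2 ∂μ :=
    J_lt_of_pos hmom m b0 hb0
  have hex : ∃ bstar : EuclideanSpace ℝ (Fin n),
      ∀ b, ∫ x, min (‖m - x‖ ^ 2) (‖bstar - x‖ ^ 2) ∂μ ≤
        ∫ x, min (‖m - x‖ ^ 2) (‖b - x‖ ^ 2) ∂μ := by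
    have hmono : Monotone fun k : ℕ => closedBall m (k : ℝ) := fun i j hij =>
      closedBall_subset_closedBall (by exact_mod_cast hij)
    have hT : Tendsto (fun k : ℕ => ∫ x in closedBall m (k:ℝ), ‖m - x‖^2 ∂μ) atTop
        (𝓝 (∫ x in ⋃ k : ℕ, closedBall m (k:ℝ), ‖m - x‖^2 ∂μ)) :=
      tendsto_setIntegral_of_monotone (fun _ => measurableSet_closedBall) hmono
        ((integ_sq hmom m).integrableOn)
    rw [iUnion_closedBall_nat, setIntegral_univ] at hT
    obtain ⟨k, hk⟩ := (hT.eventually (eventually_gt_nhds hb0lt)).exists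
    set R : ℝ := max (2*(k:ℝ)) ‖b0 - m‖ with hR
    have hRnn : (0:ℝ) ≤ R := le_trans (by positivity) (le_max_left _ _)
    obtain ⟨bstar, hbmem, hbmin⟩ := (isCompact_closedBall m R).exists_isMinOn
      ⟨m, mem_closedBall_self hRnn⟩ ((J_cont hmom m).continuousOn)
    refine ⟨bstar, fun b => ?_⟩
    by_cases hbball : b ∈ closedBall m R
    · exact hbmin hbball
    · have hfar : R < ‖b - m‖ := by rwa [mem_closedBall, dist_eq_norm, not_le] at hbball
      have h2k : 2*(k:ℝ) ≤ ‖b - m‖ := le_trans (le_max_left _ _) (le_of_lt hfar)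
      have hJb : ∫ x in closedBall m (k:ℝ), ‖m - x‖^2 ∂μ ≤
          ∫ x, min (‖m - x‖ ^ 2) (‖b - x‖ ^ 2) ∂μ :=
        J_lower hmom m b (k:ℝ) (by positivity) h2k
      have hb0mem : b0 ∈ closedBall m R := by
        rw [mem_closedBall, dist_eq_norm]; exact le_max_right _ _
      refine le_of_lt ?_
      calc ∫ x, min (‖m - x‖ ^ 2) (‖bstar - x‖ ^ 2) ∂μ
          ≤ ∫ x, min (‖m - x‖ ^ 2) (‖b0 - x‖ ^ 2) ∂μ := hbmin hb0mem
        _ < ∫ x in closedBall m (k:ℝ), ‖m - x‖^2 ∂μ := hk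
        _ ≤ ∫ x, min (‖m - x‖ ^ 2) (‖b - x‖ ^ 2) ∂μ := hJb
  obtain ⟨bstar0, hbstar0⟩ := hex
  have hchar : ∀ bs : EuclideanSpace ℝ (Fin n),
      (∀ b, ∫ x, min (‖m - x‖ ^ 2) (‖bs - x‖ ^ 2) ∂μ ≤
        ∫ x, min (‖m - x‖ ^ 2) (‖b - x‖ ^ 2) ∂μ) →
      bs ≠ m ∧ 0 < μ {x | ‖bs - x‖ < ‖m - x‖} ∧
        (μ {x | ‖bs - x‖ < ‖m - x‖}).toReal • bs =
          ∫ x in {x | ‖bs - x‖ < ‖m - x‖}, x ∂μ := by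
    intro bs hmin
    have hlt : ∫ x, min (‖m - x‖ ^ 2) (‖bs - x‖ ^ 2) ∂μ < ∫ x, ‖m - x‖ ^ 2 ∂μ :=
      lt_of_le_of_lt (hmin b0) hb0lt
    have hVpos : 0 < μ {x | ‖bs - x‖ < ‖m - x‖} := by
      rw [pos_iff_ne_zero]
      intro h0
      exact absurd (J_eq_of_zero m bs h0) (ne_of_lt hlt)
    have hne : bs ≠ m := by
      intro h
      rw [h] at hVpos
      simp at hVpos
    have htR : (μ {x | ‖bs - x‖ < ‖m - x‖}).toReal ≠ 0 := by
      simp [ENNReal.toReal_ne_zero, hVpos.ne', measure_ne_top μ _]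
    set c : EuclideanSpace ℝ (Fin n) :=
      ((μ {x | ‖bs - x‖ < ‖m - x‖}).toReal)⁻¹ •
        ∫ x in {x | ‖bs - x‖ < ‖m - x‖}, x ∂μ with hc_def
    have hc : (μ {x | ‖bs - x‖ < ‖m - x‖}).toReal • c =
        ∫ x in {x | ‖bs - x‖ < ‖m - x‖}, x ∂μ := by
      rw [hc_def, smul_smul, mul_inv_cancel₀ htR, one_smul]
    have hcb : bs = c := by
      by_contra hne2
      have hpa := parallel_axis hmom {x | ‖bs - x‖ < ‖m - x‖} c bs hc
      have hlt2 : ∫ x in {x | ‖bs - x‖ < ‖m - x‖}, ‖c - x‖^2 ∂μ <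
          ∫ x in {x | ‖bs - x‖ < ‖m - x‖}, ‖bs - x‖^2 ∂μ := by
        rw [hpa]
        have hp : 0 < (μ {x | ‖bs - x‖ < ‖m - x‖}).toReal * ‖bs - c‖^2 := by
          apply mul_pos
          · exact lt_of_le_of_ne ENNReal.toReal_nonneg (Ne.symm htR)
          · have h5 : bs - c ≠ 0 := sub_ne_zero.2 hne2
            have := norm_pos_iff.2 h5
            positivity
        linarith
      have hJc : ∫ x, min (‖m - x‖ ^ 2) (‖c - x‖ ^ 2) ∂μ ≤
          (∫ x in {x | ‖bs - x‖ < ‖m - x‖}, ‖c - x‖^2 ∂μ) +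
            ∫ x in {x | ‖bs - x‖ < ‖m - x‖}ᶜ, ‖m - x‖^2 ∂μ :=
        J_le_decomp hmom m c _ (measurable_V m bs)
      have hJbs : ∫ x, min (‖m - x‖ ^ 2) (‖bs - x‖ ^ 2) ∂μ =
          (∫ x in {x | ‖bs - x‖ < ‖m - x‖}, ‖bs - x‖^2 ∂μ) +
            ∫ x in {x | ‖bs - x‖ < ‖m - x‖}ᶜ, ‖m - x‖^2 ∂μ :=
        J_decomp hmom m bs
      have hfinal : ∫ x, min (‖m - x‖ ^ 2) (‖c - x‖ ^ 2) ∂μ <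
          ∫ x, min (‖m - x‖ ^ 2) (‖bs - x‖ ^ 2) ∂μ := by
        rw [hJbs]; linarith
      exact absurd (hmin c) (not_le.2 hfinal)
    exact ⟨hne, hVpos, by rw [← hcb] at hc; exact hc⟩
  exact ⟨⟨bstar0, hbstar0, by rw [hMS]; exact lt_of_le_of_lt (hbstar0 b0) hb0lt⟩, hchar⟩
end

section
/- Let ε ∈ (0, J_MS), let r > 0 satisfy μ({x : ‖x‖ ≤ r}) ≥ 1/2, and set a₀ := 1 + r + √(2(J_MS − ε)). If both ‖a‖ > a₀ and ‖b‖ > a₀, then J(a, b) > J_MS − ε. -/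
open MeasureTheory
open scoped ENNReal

/-- Let `ε ∈ (0, J_MS)`, let `r > 0` satisfy `μ({‖x‖ ≤ r}) ≥ 1/2`, and set
`a₀ = 1 + r + √(2(J_MS − ε))`. If both `‖a‖ > a₀` and `‖b‖ > a₀`, then
`J(a,b) > J_MS − ε`. -/
theorem cost_large_when_both_estimators_far
    (n : ℕ) (hn : 1 ≤ n)
    (μ : Measure (EuclideanSpace ℝ (Fin n))) [IsProbabilityMeasure μ]
    (hac : μ ≪ volume)
    (hmom : Integrable (fun x => ‖x‖ ^ 2) μ)
    (JMS : ℝ) (hJMS : JMS = ∫ x, ‖x - (∫ y, y ∂μ)‖ ^ 2 ∂μ)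
    (ε : ℝ) (hε : 0 < ε) (hεJ : ε < JMS)
    (r : ℝ) (hr : 0 < r) (hrμ : (1 : ℝ≥0∞) / 2 ≤ μ {x | ‖x‖ ≤ r})
    (a₀ : ℝ) (ha₀ : a₀ = 1 + r + Real.sqrt (2 * (JMS - ε)))
    (a b : EuclideanSpace ℝ (Fin n)) (ha : a₀ < ‖a‖) (hb : a₀ < ‖b‖) :
    JMS - ε < ∫ x, min (‖a - x‖ ^ 2) (‖b - x‖ ^ 2) ∂μ := by
  set s : ℝ := Real.sqrt (2 * (JMS - ε)) with hs_def
  have hs0 : 0 ≤ s := Real.sqrt_nonneg _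
  have hs2 : s ^ 2 = 2 * (JMS - ε) := Real.sq_sqrt (by linarith)
  set c : ℝ := (1 + s) ^ 2 with hc_def
  set S : Set (EuclideanSpace ℝ (Fin n)) := {x | ‖x‖ ≤ r} with hS_def
  have hSmeas : MeasurableSet S := by
    have : IsClosed S := isClosed_le continuous_norm continuous_const
    exact this.measurableSet
  -- integrability of ‖v - x‖^2
  have hInt : ∀ v : EuclideanSpace ℝ (Fin n),
      Integrable (fun x => ‖v - x‖ ^ 2) μ := by
    intro v
    have hg : Integrable (fun x : EuclideanSpace ℝ (Fin n) =>
        2 * ‖v‖ ^ 2 + 2 * ‖x‖ ^ 2) μ :=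
      (integrable_const _).add (hmom.const_mul 2)
    refine hg.mono ?_ ?_
    · exact (Continuous.aestronglyMeasurable (by continuity))
    · filter_upwards with x
      have h1 : ‖v - x‖ ≤ ‖v‖ + ‖x‖ := norm_sub_le v x
      have h2 : (0:ℝ) ≤ ‖v - x‖ := norm_nonneg _
      rw [Real.norm_eq_abs, Real.norm_eq_abs, abs_of_nonneg (by positivity),
        abs_of_nonneg (by positivity)]
      have h3 : ‖v - x‖ ^ 2 ≤ (‖v‖ + ‖x‖) ^ 2 := by nlinarith [mul_le_mul h1 h1 h2 (by positivity : (0:ℝ) ≤ ‖v‖ + ‖x‖)]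
      nlinarith [sq_nonneg (‖v‖ - ‖x‖)]
  have hminInt : Integrable (fun x => min (‖a - x‖ ^ 2) (‖b - x‖ ^ 2)) μ := by
    refine (hInt a).mono (Continuous.aestronglyMeasurable (by continuity)) ?_
    filter_upwards with x
    rw [Real.norm_eq_abs, Real.norm_eq_abs]
    have h1 : (0:ℝ) ≤ min (‖a - x‖ ^ 2) (‖b - x‖ ^ 2) :=
      le_min (by positivity) (by positivity)
    rw [abs_of_nonneg h1, abs_of_nonneg (by positivity)]
    exact min_le_left _ _
  have hindInt : Integrable (S.indicator fun _ => c) μ := by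
    rw [integrable_indicator_iff hSmeas]
    exact integrableOn_const (measure_ne_top μ S)
  -- pointwise bound
  have hpt : ∀ x, S.indicator (fun _ => c) x ≤ min (‖a - x‖ ^ 2) (‖b - x‖ ^ 2) := by
    intro x
    by_cases hx : x ∈ S
    · rw [Set.indicator_of_mem hx]
      have hxr : ‖x‖ ≤ r := hx
      refine le_min ?_ ?_
      · have h1 : ‖a‖ - ‖x‖ ≤ ‖a - x‖ := norm_sub_norm_le a x
        have h2 : 1 + s ≤ ‖a - x‖ := by rw [ha₀] at ha; linarith
        exact pow_le_pow_left₀ (by positivity) h2 2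
      · have h1 : ‖b‖ - ‖x‖ ≤ ‖b - x‖ := norm_sub_norm_le b x
        have h2 : 1 + s ≤ ‖b - x‖ := by rw [ha₀] at hb; linarith
        exact pow_le_pow_left₀ (by positivity) h2 2
    · rw [Set.indicator_of_notMem hx]
      exact le_min (by positivity) (by positivity)
  have hle : ∫ x, S.indicator (fun _ => c) x ∂μ
      ≤ ∫ x, min (‖a - x‖ ^ 2) (‖b - x‖ ^ 2) ∂μ :=
    integral_mono hindInt hminInt hpt
  have hind_eq : ∫ x, S.indicator (fun _ => c) x ∂μ = (μ S).toReal * c := by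
    rw [integral_indicator_const _ hSmeas]; simp [smul_eq_mul, measureReal_def]
  have hμS : (1/2 : ℝ) ≤ (μ S).toReal := by
    have h1 : ((1:ℝ≥0∞)/2).toReal ≤ (μ S).toReal :=
      ENNReal.toReal_mono (measure_ne_top μ S) hrμ
    simpa using h1
  have hc1 : 1 + 2 * (JMS - ε) ≤ c := by
    have h5 : c = 1 + 2 * s + s ^ 2 := by rw [hc_def]; ring
    rw [h5, ← hs2]; linarith
  have hcpos : 0 < c := by rw [hc_def]; positivity
  have hkey : JMS - ε < (μ S).toReal * c := by
    have h4 : (1/2 : ℝ) * c ≤ (μ S).toReal * c :=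
      mul_le_mul_of_nonneg_right hμS hcpos.le
    linarith
  calc JMS - ε < (μ S).toReal * c := hkey
    _ = ∫ x, S.indicator (fun _ => c) x ∂μ := hind_eq.symm
    _ ≤ _ := hle
end

section
/- For every ε > 0 there exists L(ε) > 0 such that for all a, b ∈ ℝⁿ with ‖b‖ − ‖a‖ > L(ε), the two-estimator cost satisfies J(a, b) > J_MS − ε. -/
open MeasureTheory Filter Topology

/-- For every `ε > 0` there exists `L(ε) > 0` such that whenever
`‖b‖ − ‖a‖ > L(ε)`, the two-estimator cost satisfies `J(a,b) > J_MS − ε`. -/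
theorem cost_large_when_norm_difference_large
    (n : ℕ) (hn : 1 ≤ n)
    (μ : Measure (EuclideanSpace ℝ (Fin n))) [IsProbabilityMeasure μ]
    (hac : μ ≪ volume)
    (hmom : Integrable (fun x => ‖x‖ ^ 2) μ)
    (ε : ℝ) (hε : 0 < ε) :
    ∃ L : ℝ, 0 < L ∧
      ∀ a b : EuclideanSpace ℝ (Fin n), L < ‖b‖ - ‖a‖ →
        (∫ x, ‖x - (∫ y, y ∂μ)‖ ^ 2 ∂μ) - ε <
          ∫ x, min (‖a - x‖ ^ 2) (‖b - x‖ ^ 2) ∂μ := by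
  classical
  set E := EuclideanSpace ℝ (Fin n) with hE
  -- integrability of the identity
  have hid : Integrable (fun x : E => x) μ := by
    refine Integrable.mono' (hmom.add (integrable_const 1)) ?_ ?_
    · exact (continuous_id).aestronglyMeasurable
    · filter_upwards with x
      have : ‖x‖ ≤ ‖x‖ ^ 2 + 1 := by nlinarith [norm_nonneg x, sq_nonneg (‖x‖ - 1)]
      simpa using this
  set m : E := ∫ y, y ∂μ with hm
  -- integrability of shifted square norms
  have hsq : ∀ c : E, Integrable (fun x : E => ‖c - x‖ ^ 2) μ := by
    intro c
    refine Integrable.mono' ((hmom.const_mul 2).add (integrable_const (2 * ‖c‖ ^ 2))) ?_ ?_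
    · exact (Continuous.pow (continuous_const.sub continuous_id).norm 2).aestronglyMeasurable
    · filter_upwards with x
      have h1 : ‖c - x‖ ≤ ‖c‖ + ‖x‖ := norm_sub_le _ _
      have : ‖c - x‖ ^ 2 ≤ 2 * ‖x‖ ^ 2 + 2 * ‖c‖ ^ 2 := by
        nlinarith [norm_nonneg (c - x), norm_nonneg c, norm_nonneg x, sq_nonneg (‖c‖ - ‖x‖)]
      simpa [abs_of_nonneg (sq_nonneg ‖c - x‖)] using this
  -- the balls
  set B : ℕ → Set E := fun k => Metric.closedBall (0 : E) k with hB
  have hBm : ∀ k, MeasurableSet (B k) := fun k => measurableSet_closedBall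
  have hBmono : Monotone B := fun i j hij =>
    Metric.closedBall_subset_closedBall (by exact_mod_cast hij)
  have hBU : (⋃ k, B k) = Set.univ := by
    ext x
    simp only [Set.mem_iUnion, Set.mem_univ, iff_true, hB, Metric.mem_closedBall,
      dist_zero_right]
    obtain ⟨k, hk⟩ := exists_nat_ge ‖x‖
    exact ⟨k, hk⟩
  -- limits
  have key : ∀ (f : E → ℝ) (hf : Integrable f μ),
      Tendsto (fun k => ∫ x in B k, f x ∂μ) atTop (𝓝 (∫ x, f x ∂μ)) := by
    intro f hf
    have := tendsto_setIntegral_of_monotone (μ := μ) (f := f) hBm hBmono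
      (by rw [hBU]; exact hf.integrableOn)
    rwa [hBU, setIntegral_univ] at this
  have keyV : Tendsto (fun k => ∫ x in B k, x ∂μ) atTop (𝓝 m) := by
    have := tendsto_setIntegral_of_monotone (μ := μ) (f := fun x : E => x) hBm hBmono
      (by rw [hBU]; exact hid.integrableOn)
    rwa [hBU, setIntegral_univ] at this
  have T1 : Tendsto (fun k => ∫ x in B k, ‖x‖ ^ 2 ∂μ) atTop (𝓝 (∫ x, ‖x‖ ^ 2 ∂μ)) :=
    key _ hmom
  have T3 : Tendsto (fun k => (μ (B k)).toReal) atTop (𝓝 1) := by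
    have := key (fun _ => (1 : ℝ)) (integrable_const 1)
    simpa [setIntegral_const, measure_univ, Measure.real] using this
  -- J_MS = ∫‖x‖² - ‖m‖²
  have hJMS : (∫ x, ‖x - m‖ ^ 2 ∂μ) = (∫ x, ‖x‖ ^ 2 ∂μ) - ‖m‖ ^ 2 := by
    have hinner : Integrable (fun x : E => (inner ℝ m x : ℝ)) μ := by
      exact hid.const_inner m
    have expand : ∀ x : E, ‖x - m‖ ^ 2 = ‖x‖ ^ 2 - 2 * (inner ℝ m x : ℝ) + ‖m‖ ^ 2 := by
      intro x
      rw [norm_sub_sq_real, real_inner_comm]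
    calc (∫ x, ‖x - m‖ ^ 2 ∂μ)
        = ∫ x, (‖x‖ ^ 2 - 2 * (inner ℝ m x : ℝ) + ‖m‖ ^ 2) ∂μ := by
          simp_rw [expand]
      _ = (∫ x, ‖x‖ ^ 2 ∂μ) - 2 * (inner ℝ m m : ℝ) + ‖m‖ ^ 2 := by
          have h1 : Integrable (fun x : E => 2 * (inner ℝ m x : ℝ)) μ := hinner.const_mul 2
          have h2 : Integrable (fun x : E => ‖x‖ ^ 2 - 2 * (inner ℝ m x : ℝ)) μ := hmom.sub h1
          rw [integral_add h2 (integrable_const _), integral_sub hmom h1, integral_const,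
            integral_const_mul, integral_inner hid, probReal_univ]
          simp
          exact real_inner_self_eq_norm_sq m
      _ = (∫ x, ‖x‖ ^ 2 ∂μ) - ‖m‖ ^ 2 := by
          rw [real_inner_self_eq_norm_sq]; ring
  -- the lower-bound sequence
  have T : Tendsto (fun k => (∫ x in B k, ‖x‖ ^ 2 ∂μ) - ‖∫ x in B k, x ∂μ‖ ^ 2 / (μ (B k)).toReal)
      atTop (𝓝 (∫ x, ‖x - m‖ ^ 2 ∂μ)) := by
    rw [hJMS]
    have : Tendsto (fun k => ‖∫ x in B k, x ∂μ‖ ^ 2) atTop (𝓝 (‖m‖ ^ 2)) :=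
      (keyV.norm).pow 2
    simpa using T1.sub (this.div T3 one_ne_zero)
  -- choose k₀
  have hev : ∀ᶠ k in atTop,
      ((∫ x, ‖x - m‖ ^ 2 ∂μ) - ε < (∫ x in B k, ‖x‖ ^ 2 ∂μ) - ‖∫ x in B k, x ∂μ‖ ^ 2 / (μ (B k)).toReal)
      ∧ 0 < (μ (B k)).toReal := by
    filter_upwards [T.eventually (eventually_gt_nhds (by linarith : (∫ x, ‖x - m‖ ^ 2 ∂μ) - ε < ∫ x, ‖x - m‖ ^ 2 ∂μ)),
      T3.eventually (eventually_gt_nhds (by norm_num : (0:ℝ) < 1))] with k h1 h2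
    exact ⟨h1, h2⟩
  obtain ⟨k₀, hk₀⟩ := hev.exists
  obtain ⟨hk₀gt, hk₀pos⟩ := hk₀
  refine ⟨2 * k₀ + 1, by positivity, fun a b hab => ?_⟩
  -- min is integrable
  have hmin : Integrable (fun x : E => min (‖a - x‖ ^ 2) (‖b - x‖ ^ 2)) μ := by
    refine Integrable.mono' ((hsq a).add (hsq b)) ?_ ?_
    · exact (Continuous.min
        ((continuous_const.sub continuous_id).norm.pow 2)
        ((continuous_const.sub continuous_id).norm.pow 2)).aestronglyMeasurable
    · filter_upwards with x
      have h1 : (0:ℝ) ≤ ‖a - x‖ ^ 2 := sq_nonneg _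
      have h2 : (0:ℝ) ≤ ‖b - x‖ ^ 2 := sq_nonneg _
      rw [Real.norm_of_nonneg (le_min h1 h2)]
      exact le_add_of_le_of_nonneg (min_le_left _ _) h2
  have hminnn : 0 ≤ᵐ[μ] fun x : E => min (‖a - x‖ ^ 2) (‖b - x‖ ^ 2) := by
    filter_upwards with x
    exact le_min (sq_nonneg _) (sq_nonneg _)
  -- on B k₀ the min equals ‖a - x‖²
  have heq : Set.EqOn (fun x : E => min (‖a - x‖ ^ 2) (‖b - x‖ ^ 2))
      (fun x : E => ‖a - x‖ ^ 2) (B k₀) := by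
    intro x hx
    have hxk : ‖x‖ ≤ k₀ := by
      simpa [hB, Metric.mem_closedBall, dist_zero_right] using hx
    have hax : ‖a - x‖ ≤ ‖a‖ + k₀ := (norm_sub_le _ _).trans (by linarith)
    have hbx : ‖b‖ - k₀ ≤ ‖b - x‖ := by
      have := norm_sub_norm_le b (b - x)
      simp only [sub_sub_cancel] at this
      linarith
    have hle : ‖a - x‖ ≤ ‖b - x‖ := by linarith
    simp only
    rw [min_eq_left]
    exact pow_le_pow_left₀ (norm_nonneg _) hle 2
  -- the quadratic lower bound on B k₀
  set p : ℝ := (μ (B k₀)).toReal with hp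
  set s : E := ∫ x in B k₀, x ∂μ with hs
  have hquad : (∫ x in B k₀, ‖x‖ ^ 2 ∂μ) - ‖s‖ ^ 2 / p ≤ ∫ x in B k₀, ‖a - x‖ ^ 2 ∂μ := by
    have hinner : Integrable (fun x : E => (inner ℝ a x : ℝ)) (μ.restrict (B k₀)) :=
      (hid.restrict).const_inner a
    have expand : ∀ x : E, ‖a - x‖ ^ 2 = ‖a‖ ^ 2 - 2 * (inner ℝ a x : ℝ) + ‖x‖ ^ 2 :=
      fun x => norm_sub_sq_real a x
    have hcalc : (∫ x in B k₀, ‖a - x‖ ^ 2 ∂μ)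
        = p * ‖a‖ ^ 2 - 2 * (inner ℝ a s : ℝ) + ∫ x in B k₀, ‖x‖ ^ 2 ∂μ := by
      simp_rw [expand]
      have h1 : Integrable (fun x : E => 2 * (inner ℝ a x : ℝ)) (μ.restrict (B k₀)) :=
        hinner.const_mul 2
      have h2 : Integrable (fun x : E => ‖a‖ ^ 2 - 2 * (inner ℝ a x : ℝ)) (μ.restrict (B k₀)) :=
        (integrable_const _).sub h1
      rw [integral_add h2 hmom.restrict, integral_sub (integrable_const _) h1, integral_const,
        integral_const_mul, integral_inner hid.restrict]
      simp only [smul_eq_mul, Measure.real, Measure.restrict_apply_univ, ← hp, ← hs]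
      rfl
    rw [hcalc]
    have hIs : (inner ℝ a s : ℝ) ≤ ‖a‖ * ‖s‖ := real_inner_le_norm a s
    have hdiv : 2 * (inner ℝ a s : ℝ) - p * ‖a‖ ^ 2 ≤ ‖s‖ ^ 2 / p := by
      rw [le_div_iff₀ hk₀pos]
      nlinarith [sq_nonneg (‖s‖ - p * ‖a‖), mul_nonneg (norm_nonneg a) (norm_nonneg s),
        hk₀pos.le]
    linarith
  -- put it all together
  calc (∫ x, ‖x - m‖ ^ 2 ∂μ) - ε
      < (∫ x in B k₀, ‖x‖ ^ 2 ∂μ) - ‖s‖ ^ 2 / p := hk₀gt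
    _ ≤ ∫ x in B k₀, ‖a - x‖ ^ 2 ∂μ := hquad
    _ = ∫ x in B k₀, min (‖a - x‖ ^ 2) (‖b - x‖ ^ 2) ∂μ :=
        (setIntegral_congr_fun (hBm k₀) heq).symm
    _ ≤ ∫ x, min (‖a - x‖ ^ 2) (‖b - x‖ ^ 2) ∂μ := setIntegral_le_integral hmin hminnn
end

section
/- For any a, b ∈ ℝⁿ with a ≠ b, if the Voronoi region of b has positive measure, μ(V₂(a, b)) > 0, then the two-estimator cost strictly improves on the single-estimator mean squared error of a: J(a, b) < ∫ ‖a − x‖² dμ(x). In particular, taking a = m, if μ(V₂(m, b)) > 0 then J(m, b) < J_MS. -/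
open MeasureTheory

private lemma sq_integrable {n : ℕ} (μ : Measure (EuclideanSpace ℝ (Fin n)))
    [IsProbabilityMeasure μ]
    (hmom : Integrable (fun x => ‖x‖ ^ 2) μ) (a : EuclideanSpace ℝ (Fin n)) :
    Integrable (fun x => ‖a - x‖ ^ 2) μ := by
  have hb : Integrable (fun x => 2 * ‖a‖ ^ 2 + 2 * ‖x‖ ^ 2) μ :=
    (integrable_const _).add (hmom.const_mul 2)
  refine hb.mono' ?_ ?_
  · exact (Continuous.norm (continuous_const.sub continuous_id)).pow 2
      |>.aestronglyMeasurable
  · filter_upwards with x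
    have h1 : ‖a - x‖ ≤ ‖a‖ + ‖x‖ := norm_sub_le a x
    have h2 : (0:ℝ) ≤ ‖a - x‖ := norm_nonneg _
    rw [Real.norm_eq_abs, abs_of_nonneg (by positivity)]
    have h3 : ‖a - x‖ * ‖a - x‖ ≤ (‖a‖ + ‖x‖) * (‖a‖ + ‖x‖) :=
      mul_self_le_mul_self h2 h1
    nlinarith [sq_nonneg (‖a‖ - ‖x‖)]

private lemma key {n : ℕ} (μ : Measure (EuclideanSpace ℝ (Fin n)))
    [IsProbabilityMeasure μ]
    (hmom : Integrable (fun x => ‖x‖ ^ 2) μ)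
    (a b : EuclideanSpace ℝ (Fin n))
    (hpos : 0 < μ {x | ‖b - x‖ < ‖a - x‖}) :
    ∫ x, min (‖a - x‖ ^ 2) (‖b - x‖ ^ 2) ∂μ < ∫ x, ‖a - x‖ ^ 2 ∂μ := by
  have hf := sq_integrable μ hmom a
  have hg := sq_integrable μ hmom b
  have hmin : Integrable (fun x => min (‖a - x‖ ^ 2) (‖b - x‖ ^ 2)) μ := by
    refine Integrable.mono (f := fun x => min (‖a - x‖ ^ 2) (‖b - x‖ ^ 2)) hf ?_ ?_
    · exact (((Continuous.norm (continuous_const.sub continuous_id)).pow 2).min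
        ((Continuous.norm (continuous_const.sub continuous_id)).pow 2)).aestronglyMeasurable
    · filter_upwards with x
      have h0 : (0:ℝ) ≤ min (‖a - x‖ ^ 2) (‖b - x‖ ^ 2) :=
        le_min (sq_nonneg _) (sq_nonneg _)
      exact le_trans (le_of_eq (Real.norm_of_nonneg h0))
        ((min_le_left (‖a - x‖ ^ 2) (‖b - x‖ ^ 2)).trans
          (le_of_eq (Real.norm_of_nonneg (sq_nonneg ‖a - x‖)).symm))
  have hdiff : Integrable (fun x => ‖a - x‖ ^ 2 - min (‖a - x‖ ^ 2) (‖b - x‖ ^ 2)) μ :=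
    hf.sub hmin
  have hnn : ∀ x, 0 ≤ ‖a - x‖ ^ 2 - min (‖a - x‖ ^ 2) (‖b - x‖ ^ 2) := fun x => by
    have := min_le_left (‖a - x‖ ^ 2) (‖b - x‖ ^ 2); linarith
  have hsupp : {x | ‖b - x‖ < ‖a - x‖} ⊆
      Function.support (fun x => ‖a - x‖ ^ 2 - min (‖a - x‖ ^ 2) (‖b - x‖ ^ 2)) := by
    intro x hx
    simp only [Set.mem_setOf_eq] at hx
    have hlt : ‖b - x‖ ^ 2 < ‖a - x‖ ^ 2 := by
      have := norm_nonneg (b - x); nlinarith [hx.le, hx]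
    have : min (‖a - x‖ ^ 2) (‖b - x‖ ^ 2) = ‖b - x‖ ^ 2 := min_eq_right hlt.le
    simp only [Function.mem_support, this]
    linarith
  have hpos2 : 0 < μ (Function.support
      (fun x => ‖a - x‖ ^ 2 - min (‖a - x‖ ^ 2) (‖b - x‖ ^ 2))) :=
    lt_of_lt_of_le hpos (measure_mono hsupp)
  have hint : 0 < ∫ x, (‖a - x‖ ^ 2 - min (‖a - x‖ ^ 2) (‖b - x‖ ^ 2)) ∂μ := by
    rw [integral_pos_iff_support_of_nonneg hnn hdiff]
    exact hpos2
  rw [integral_sub hf hmin] at hint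
  linarith

/-- If `a ≠ b` and the Voronoi region of `b` has positive measure, then the
two-estimator cost strictly improves on the single-estimator MSE of `a`:
`J(a,b) < ∫ ‖a − x‖² dμ`. In particular, for `a = m` the mean, if
`μ(V₂(m,b)) > 0` then `J(m,b) < J_MS`. -/
theorem cost_strict_improvement
    (n : ℕ) (hn : 1 ≤ n)
    (μ : Measure (EuclideanSpace ℝ (Fin n))) [IsProbabilityMeasure μ]
    (hac : μ ≪ volume)
    (hmom : Integrable (fun x => ‖x‖ ^ 2) μ) :
    (∀ a b : EuclideanSpace ℝ (Fin n), a ≠ b →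
      0 < μ {x | ‖b - x‖ < ‖a - x‖} →
      ∫ x, min (‖a - x‖ ^ 2) (‖b - x‖ ^ 2) ∂μ < ∫ x, ‖a - x‖ ^ 2 ∂μ) ∧
    (∀ b : EuclideanSpace ℝ (Fin n), (∫ y, y ∂μ) ≠ b →
      0 < μ {x | ‖b - x‖ < ‖(∫ y, y ∂μ) - x‖} →
      ∫ x, min (‖(∫ y, y ∂μ) - x‖ ^ 2) (‖b - x‖ ^ 2) ∂μ <
        ∫ x, ‖x - (∫ y, y ∂μ)‖ ^ 2 ∂μ) := by
  constructor
  · exact fun a b _ h => key μ hmom a b h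
  · intro b _ h
    have := key μ hmom (∫ y, y ∂μ) b h
    simpa [norm_sub_rev] using this
end

section
/- For any fixed b ∈ ℝⁿ, the function a ↦ J(a, b) is differentiable at every a ≠ b, and its gradient there equals 2(a · μ(V₁(a, b)) − ∫_{V₁(a, b)} x dμ(x)); that is, the Fréchet derivative at a is the linear map v ↦ 2⟨a · μ(V₁(a, b)) − ∫_{V₁(a, b)} x dμ(x), v⟩. -/
open MeasureTheory Metric

set_option maxHeartbeats 1000000

/-- For fixed `b`, the map `a ↦ J(a,b)` is differentiable at every `a ≠ b`, with
Fréchet derivative the linear map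
`v ↦ 2⟨a·μ(V₁(a,b)) − ∫_{V₁(a,b)} x dμ, v⟩`. -/
theorem cost_hasFDerivAt
    (n : ℕ) (hn : 1 ≤ n)
    (μ : Measure (EuclideanSpace ℝ (Fin n))) [IsProbabilityMeasure μ]
    (hac : μ ≪ volume)
    (hmom : Integrable (fun x => ‖x‖ ^ 2) μ)
    (b : EuclideanSpace ℝ (Fin n)) (a : EuclideanSpace ℝ (Fin n)) (hab : a ≠ b) :
    HasFDerivAt (fun a' : EuclideanSpace ℝ (Fin n) =>
        ∫ x, min (‖a' - x‖ ^ 2) (‖b - x‖ ^ 2) ∂μ)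
      ((2 : ℝ) • innerSL ℝ
        ((μ {x | ‖a - x‖ < ‖b - x‖}).toReal • a -
          ∫ x in {x | ‖a - x‖ < ‖b - x‖}, x ∂μ))
      a := by
  classical
  set V : Set (EuclideanSpace ℝ (Fin n)) := {x | ‖a - x‖ < ‖b - x‖} with hVdef
  have hVopen : IsOpen V :=
    isOpen_lt (continuous_const.sub continuous_id).norm (continuous_const.sub continuous_id).norm
  -- integrability of the identity / norm
  have hμ1 : Integrable (fun x : EuclideanSpace ℝ (Fin n) => ‖x‖) μ := by
    refine ((integrable_const (1:ℝ)).add hmom).mono' continuous_norm.aestronglyMeasurable ?_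
    filter_upwards with x
    have h1 := sq_nonneg (‖x‖ - 1)
    have h2 : (0:ℝ) ≤ ‖x‖ := norm_nonneg x
    rw [Real.norm_eq_abs, abs_norm]
    simp only [Pi.add_apply]
    nlinarith
  have hid : Integrable (fun x : EuclideanSpace ℝ (Fin n) => x) μ :=
    (integrable_norm_iff aestronglyMeasurable_id).mp hμ1
  -- the bisector is null
  have hnull : μ {x : EuclideanSpace ℝ (Fin n) | ‖a - x‖ = ‖b - x‖} = 0 := by
    apply hac
    have heq : {x : EuclideanSpace ℝ (Fin n) | ‖a - x‖ = ‖b - x‖}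
        = (AffineSubspace.perpBisector a b : Set (EuclideanSpace ℝ (Fin n))) := by
      ext x
      rw [SetLike.mem_coe, AffineSubspace.mem_perpBisector_iff_dist_eq', dist_eq_norm,
        dist_eq_norm, Set.mem_setOf_eq]
    rw [heq]
    exact Measure.addHaar_affineSubspace volume _
      (fun h => hab (AffineSubspace.perpBisector_eq_top.mp h))
  -- pointwise derivative
  set g : EuclideanSpace ℝ (Fin n) → (EuclideanSpace ℝ (Fin n) →L[ℝ] ℝ) :=
    fun x => (2:ℝ) • innerSL ℝ (a - x) with hgdef
  set F' : EuclideanSpace ℝ (Fin n) → (EuclideanSpace ℝ (Fin n) →L[ℝ] ℝ) :=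
    V.indicator g with hF'def
  have hgcont : Continuous g :=
    ((innerSL ℝ).continuous.comp (continuous_const.sub continuous_id)).const_smul (2:ℝ)
  have hF'_meas : AEStronglyMeasurable F' μ :=
    (hgcont.aestronglyMeasurable.indicator hVopen.measurableSet)
  -- measurability of F a'
  have hF_meas : ∀ᶠ a' in nhds a, AEStronglyMeasurable
      (fun x => min (‖a' - x‖ ^ 2) (‖b - x‖ ^ 2)) μ := by
    filter_upwards with a'
    exact (((continuous_const.sub continuous_id).norm.pow 2).min
      ((continuous_const.sub continuous_id).norm.pow 2)).aestronglyMeasurable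
  -- integrability at a
  have hF_int : Integrable (fun x => min (‖a - x‖ ^ 2) (‖b - x‖ ^ 2)) μ := by
    refine ((integrable_const (2*‖b‖^2)).add (hmom.const_mul 2)).mono'
      (((continuous_const.sub continuous_id).norm.pow 2).min
        ((continuous_const.sub continuous_id).norm.pow 2)).aestronglyMeasurable ?_
    filter_upwards with x
    have h1 : (0:ℝ) ≤ ‖a - x‖ ^ 2 := sq_nonneg _
    have h2 : (0:ℝ) ≤ ‖b - x‖ ^ 2 := sq_nonneg _
    have h3 : ‖b - x‖ ≤ ‖b‖ + ‖x‖ := norm_sub_le _ _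
    have h4 : min (‖a - x‖ ^ 2) (‖b - x‖ ^ 2) ≤ ‖b - x‖ ^ 2 := min_le_right _ _
    rw [Real.norm_eq_abs, abs_of_nonneg (le_min h1 h2)]
    simp only [Pi.add_apply]
    have h5 : ‖b - x‖ ^ 2 ≤ (‖b‖ + ‖x‖) ^ 2 := pow_le_pow_left₀ (norm_nonneg _) h3 2
    nlinarith [sq_nonneg (‖b‖ - ‖x‖)]
  -- Lipschitz bound
  have h_lip : ∀ᵐ x ∂μ, LipschitzOnWith (Real.nnabs (2*(‖a‖+1+‖x‖)))
      (fun a' => min (‖a' - x‖ ^ 2) (‖b - x‖ ^ 2)) (ball a 1) := by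
    filter_upwards with x
    apply LipschitzOnWith.of_dist_le_mul
    intro y hy z hz
    rw [Real.dist_eq, dist_eq_norm, Real.coe_nnabs]
    have h1 : |min (‖y - x‖ ^ 2) (‖b - x‖ ^ 2) - min (‖z - x‖ ^ 2) (‖b - x‖ ^ 2)|
        ≤ |‖y - x‖ ^ 2 - ‖z - x‖ ^ 2| := by
      refine (abs_min_sub_min_le_max (‖y - x‖ ^ 2) (‖b - x‖ ^ 2) (‖z - x‖ ^ 2) (‖b - x‖ ^ 2)).trans ?_
      rw [sub_self, abs_zero]
      exact max_le le_rfl (abs_nonneg _)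
    have h2 : |‖y - x‖ - ‖z - x‖| ≤ ‖y - z‖ := by
      simpa using abs_norm_sub_norm_le (y - x) (z - x)
    have hy' : ‖y - x‖ ≤ ‖a‖ + 1 + ‖x‖ := by
      have hy2 : ‖y - a‖ < 1 := mem_ball_iff_norm.mp hy
      calc ‖y - x‖ ≤ ‖y - a‖ + ‖a - x‖ := norm_sub_le_norm_sub_add_norm_sub _ _ _
        _ ≤ 1 + (‖a‖ + ‖x‖) := by
            have := norm_sub_le a x
            linarith
        _ = ‖a‖ + 1 + ‖x‖ := by ring
    have hz' : ‖z - x‖ ≤ ‖a‖ + 1 + ‖x‖ := by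
      have hz2 : ‖z - a‖ < 1 := mem_ball_iff_norm.mp hz
      calc ‖z - x‖ ≤ ‖z - a‖ + ‖a - x‖ := norm_sub_le_norm_sub_add_norm_sub _ _ _
        _ ≤ 1 + (‖a‖ + ‖x‖) := by
            have := norm_sub_le a x
            linarith
        _ = ‖a‖ + 1 + ‖x‖ := by ring
    have h3 : |‖y - x‖ ^ 2 - ‖z - x‖ ^ 2| ≤ (2*(‖a‖+1+‖x‖)) * ‖y - z‖ := by
      have key : ‖y - x‖ ^ 2 - ‖z - x‖ ^ 2 = (‖y - x‖ - ‖z - x‖) * (‖y - x‖ + ‖z - x‖) := by ring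
      rw [key, abs_mul, abs_of_nonneg (add_nonneg (norm_nonneg _) (norm_nonneg _))]
      have hsum : ‖y - x‖ + ‖z - x‖ ≤ 2*(‖a‖+1+‖x‖) := by linarith
      have habs : (0:ℝ) ≤ |‖y - x‖ - ‖z - x‖| := abs_nonneg _
      calc |‖y - x‖ - ‖z - x‖| * (‖y - x‖ + ‖z - x‖)
          ≤ ‖y - z‖ * (2*(‖a‖+1+‖x‖)) := by
            apply mul_le_mul h2 hsum (add_nonneg (norm_nonneg _) (norm_nonneg _)) (norm_nonneg _)
        _ = (2*(‖a‖+1+‖x‖)) * ‖y - z‖ := by ring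
    have hb : (0:ℝ) ≤ 2*(‖a‖+1+‖x‖) := by positivity
    rw [abs_of_nonneg hb]
    exact h1.trans h3
  have hbound : Integrable (fun x : EuclideanSpace ℝ (Fin n) => 2*(‖a‖+1+‖x‖)) μ :=
    (((integrable_const (‖a‖+1)).add hμ1).const_mul 2)
  -- a.e. differentiability
  have h_diff : ∀ᵐ x ∂μ, HasFDerivAt (fun a' => min (‖a' - x‖ ^ 2) (‖b - x‖ ^ 2)) (F' x) a := by
    have hne : ∀ᵐ x ∂μ, ‖a - x‖ ≠ ‖b - x‖ := by
      rw [ae_iff]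
      simpa [not_not] using hnull
    filter_upwards [hne] with x hx
    rcases lt_or_gt_of_ne hx with h | h
    · have hmem : x ∈ V := h
      have hFx : F' x = g x := Set.indicator_of_mem hmem g
      have hderiv : HasFDerivAt (fun a' : EuclideanSpace ℝ (Fin n) => ‖a' - x‖ ^ 2) (g x) a := by
        refine (((hasFDerivAt_id a).sub_const x).norm_sq).congr_fderiv ?_
        ext y
        rw [ContinuousLinearMap.smul_apply, ContinuousLinearMap.smul_apply,
          ContinuousLinearMap.comp_apply, ContinuousLinearMap.id_apply]
        norm_num [nsmul_eq_mul, smul_eq_mul]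
      rw [hFx]
      apply hderiv.congr_of_eventuallyEq
      have hev : ∀ᶠ a' in nhds a, ‖a' - x‖ < ‖b - x‖ := by
        have hop : IsOpen {a' : EuclideanSpace ℝ (Fin n) | ‖a' - x‖ < ‖b - x‖} :=
          isOpen_lt (continuous_id.sub continuous_const).norm continuous_const
        exact hop.mem_nhds h
      filter_upwards [hev] with a' ha'
      exact min_eq_left (pow_le_pow_left₀ (norm_nonneg _) ha'.le 2)
    · have hmem : x ∉ V := by
        simp only [hVdef, Set.mem_setOf_eq, not_lt]
        exact h.le
      have hFx : F' x = 0 := Set.indicator_of_notMem hmem g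
      rw [hFx]
      apply (hasFDerivAt_const (‖b - x‖ ^ 2) a).congr_of_eventuallyEq
      have hev : ∀ᶠ a' in nhds a, ‖b - x‖ < ‖a' - x‖ := by
        have hop : IsOpen {a' : EuclideanSpace ℝ (Fin n) | ‖b - x‖ < ‖a' - x‖} :=
          isOpen_lt continuous_const (continuous_id.sub continuous_const).norm
        exact hop.mem_nhds h
      filter_upwards [hev] with a' ha'
      exact min_eq_right (pow_le_pow_left₀ (norm_nonneg _) ha'.le 2)
  -- apply the parametric integral theorem
  have key := hasFDerivAt_integral_of_dominated_loc_of_lip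
    (F := fun a' x => min (‖a' - x‖ ^ 2) (‖b - x‖ ^ 2)) (F' := F')
    (bound := fun x => 2*(‖a‖+1+‖x‖)) (ball_mem_nhds a one_pos) hF_meas hF_int hF'_meas h_lip hbound h_diff
  have hd := key.2
  have hint : ∫ x, F' x ∂μ
      = (2 : ℝ) • innerSL ℝ ((μ V).toReal • a - ∫ x in V, x ∂μ) := by
    rw [hF'def, integral_indicator hVopen.measurableSet, hgdef]
    rw [integral_smul]
    congr 1
    have hintg : Integrable (fun x => a - x) (μ.restrict V) :=
      (integrable_const a).sub (hid.restrict (s := V))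
    have hsub : ∫ x in V, (a - x) ∂μ = (μ V).toReal • a - ∫ x in V, x ∂μ := by
      rw [integral_sub (integrable_const a) (hid.restrict (s := V)), setIntegral_const, Measure.real]
    rw [← hsub]
    exact ContinuousLinearMap.integral_comp_comm (innerSL ℝ) hintg
  rwa [hint] at hd
end

section
/- For every d ∈ ℝ, ∫ min((m − d/2 − x)², (m + d/2 − x)²) dγ(x) = σ² + d²/4 − |d| · σ · √(2/π). -/
open MeasureTheory ProbabilityTheory

section GaussianAux

open Real Filter Set
open scoped NNReal ENNReal

/-- Auxiliary: the unnormalized standard Gaussian density. -/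
noncomputable def gaussE (x : ℝ) : ℝ := Real.exp (-(x ^ 2 / 2))

lemma gaussE_int : Integrable gaussE := by
  have h := integrable_exp_neg_mul_sq (b := (1/2:ℝ)) one_half_pos
  convert h using 2 with x
  simp only [gaussE]; congr 1; ring

lemma gaussE_absint : Integrable (fun x => |x| * gaussE x) := by
  have h := (integrable_mul_exp_neg_mul_sq (b := (1/2:ℝ)) one_half_pos).abs
  convert h using 2 with x
  rw [abs_mul, abs_of_pos (Real.exp_pos _)]
  simp only [gaussE]; congr 1; ring

lemma gaussE_sqint : Integrable (fun x => x ^ 2 * gaussE x) := by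
  have h := integrable_rpow_mul_exp_neg_mul_sq (b := (1/2:ℝ)) one_half_pos (s := 2) (by norm_num)
  convert h using 2 with x
  rw [show (2:ℝ) = ((2:ℕ):ℝ) by norm_num, Real.rpow_natCast]
  simp only [gaussE]; congr 1; ring

lemma gaussE_tendsto : Tendsto gaussE atTop (nhds 0) := by
  have h : Tendsto (fun x : ℝ => -(x ^ 2 / 2)) atTop atBot := by
    apply tendsto_neg_atTop_atBot.comp
    exact (tendsto_pow_atTop two_ne_zero).atTop_div_const two_pos
  exact Real.tendsto_exp_atBot.comp h

lemma gaussE_mul_tendsto : Tendsto (fun x => x * gaussE x) atTop (nhds 0) := by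
  have h := rpow_mul_exp_neg_mul_sq_isLittleO_exp_neg (b := (1/2:ℝ)) one_half_pos 1
  have h2 : (fun x : ℝ => x ^ (1:ℝ) * Real.exp (-(1/2) * x ^ 2)) = fun x => x * gaussE x := by
    funext x; rw [Real.rpow_one]; simp only [gaussE]; congr 1; ring
  rw [h2] at h
  refine h.trans_tendsto ?_
  have h3 : Tendsto (fun x : ℝ => -(1/2) * x) atTop atBot := by
    have h4 : Tendsto (fun x : ℝ => (1/2) * x) atTop atTop := by
      apply Filter.Tendsto.const_mul_atTop (by norm_num : (0:ℝ) < 1/2) tendsto_id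
    exact (tendsto_neg_atTop_atBot.comp h4).congr (fun x => by simp)
  exact Real.tendsto_exp_atBot.comp h3

lemma int_Ioi_mul_gaussE : ∫ x in Ioi (0:ℝ), x * gaussE x = 1 := by
  have hderiv : ∀ x ∈ Ici (0:ℝ), HasDerivAt (fun y => -gaussE y) (x * gaussE x) x := by
    intro x _
    have h1 : HasDerivAt (fun y : ℝ => -(y ^ 2 / 2)) (-x) x := by
      have := ((hasDerivAt_pow 2 x).div_const 2).neg
      exact this.congr_deriv (by norm_num)
    have := h1.exp.neg
    exact this.congr_deriv (by simp only [gaussE]; ring)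
  have hint : IntegrableOn (fun x => x * gaussE x) (Ioi (0:ℝ)) := by
    apply (gaussE_absint.integrableOn).congr_fun ?_ measurableSet_Ioi
    intro x hx; dsimp only; rw [abs_of_pos hx]
  have htend : Tendsto (fun y => -gaussE y) atTop (nhds 0) := by
    have := gaussE_tendsto.neg; simpa using this
  have := integral_Ioi_of_hasDerivAt_of_tendsto' hderiv hint htend
  rw [this]; simp [gaussE]

lemma int_abs_gaussE : ∫ x : ℝ, |x| * gaussE x = 2 := by
  have h : (fun x : ℝ => |x| * gaussE x) = fun x => (fun t => t * gaussE t) |x| := by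
    funext x; simp only [gaussE, sq_abs]
  rw [h, integral_comp_abs (f := fun t => t * gaussE t), int_Ioi_mul_gaussE]; norm_num

lemma int_gaussE : ∫ x : ℝ, gaussE x = Real.sqrt (2 * π) := by
  have h := integral_gaussian (1/2)
  rw [show π / (1/2:ℝ) = 2 * π by ring] at h
  rw [← h]
  congr 1 with x
  simp only [gaussE]; congr 1; ring

lemma int_Ioi_gaussE : ∫ x in Ioi (0:ℝ), gaussE x = Real.sqrt (2 * π) / 2 := by
  have h := integral_gaussian_Ioi (1/2)
  rw [show π / (1/2:ℝ) = 2 * π by ring] at h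
  rw [← h]
  apply setIntegral_congr_fun measurableSet_Ioi
  intro x _
  simp only [gaussE]; congr 1; ring

lemma int_Ioi_sq_gaussE : ∫ x in Ioi (0:ℝ), x ^ 2 * gaussE x = Real.sqrt (2 * π) / 2 := by
  have hderiv : ∀ x ∈ Ici (0:ℝ),
      HasDerivAt (fun y => y * gaussE y) (gaussE x - x ^ 2 * gaussE x) x := by
    intro x _
    have h1 : HasDerivAt (fun y : ℝ => -(y ^ 2 / 2)) (-x) x := by
      have := ((hasDerivAt_pow 2 x).div_const 2).neg
      exact this.congr_deriv (by norm_num)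
    have h2 : HasDerivAt gaussE (Real.exp (-(x ^ 2 / 2)) * -x) x := h1.exp
    have := (hasDerivAt_id x).mul h2
    exact this.congr_deriv (by simp only [gaussE, id]; ring)
  have hint : IntegrableOn (fun x => gaussE x - x ^ 2 * gaussE x) (Ioi (0:ℝ)) :=
    (gaussE_int.sub gaussE_sqint).integrableOn
  have key := integral_Ioi_of_hasDerivAt_of_tendsto' hderiv hint gaussE_mul_tendsto
  have key2 : ∫ x in Ioi (0:ℝ), (gaussE x - x ^ 2 * gaussE x) = 0 := by rw [key]; simp
  rw [integral_sub gaussE_int.integrableOn gaussE_sqint.integrableOn] at key2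
  have := int_Ioi_gaussE
  linarith

lemma int_sq_gaussE : ∫ x : ℝ, x ^ 2 * gaussE x = Real.sqrt (2 * π) := by
  have h : (fun x : ℝ => x ^ 2 * gaussE x) = fun x => (fun t => t ^ 2 * gaussE t) |x| := by
    funext x; simp only [gaussE, sq_abs]
  rw [h, integral_comp_abs (f := fun t => t ^ 2 * gaussE t), int_Ioi_sq_gaussE]; ring

end GaussianAux

open Real Filter Set
open scoped NNReal ENNReal

/-- For a Gaussian measure `γ` on `ℝ` with mean `m` and variance `σ²`, for every
`d ∈ ℝ`,
`∫ min((m − d/2 − x)², (m + d/2 − x)²) dγ = σ² + d²/4 − |d|·σ·√(2/π)`. -/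
theorem gaussian_symmetric_two_estimator_cost
    (m σ : ℝ) (hσ : 0 < σ)
    (γ : Measure ℝ) (hγ : γ = gaussianReal m ⟨σ ^ 2, sq_nonneg σ⟩)
    (d : ℝ) :
    ∫ x, min ((m - d / 2 - x) ^ 2) ((m + d / 2 - x) ^ 2) ∂γ =
      σ ^ 2 + d ^ 2 / 4 - |d| * σ * Real.sqrt (2 / Real.pi) := by
  subst hγ
  set v : ℝ≥0 := ⟨σ ^ 2, sq_nonneg σ⟩ with hv
  have hv0 : v ≠ 0 := by
    intro h
    have := congrArg Subtype.val h
    simp only [hv] at this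
    exact (pow_pos hσ 2).ne' this
  have hvco : (v : ℝ) = σ ^ 2 := rfl
  -- Step 1: write the integral against the Lebesgue density
  rw [gaussianReal_of_var_ne_zero _ hv0,
    show gaussianPDF m v = fun x => ((Real.toNNReal (gaussianPDFReal m v x) : ℝ≥0) : ℝ≥0∞)
      from rfl,
    integral_withDensity_eq_integral_smul ((measurable_gaussianPDFReal m v).real_toNNReal) _]
  -- Step 2: rewrite the min
  have hmin : ∀ x : ℝ, min ((m - d / 2 - x) ^ 2) ((m + d / 2 - x) ^ 2)
      = (x - m) ^ 2 + d ^ 2 / 4 - |d| * |x - m| := by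
    intro x
    have habs : |d| * |x - m| = |d * (x - m)| := (abs_mul d (x - m)).symm
    rw [habs]
    rcases le_or_gt 0 (d * (x - m)) with hc | hc
    · rw [abs_of_nonneg hc, min_eq_right (by nlinarith)]; ring
    · rw [abs_of_neg hc, min_eq_left (by nlinarith)]; ring
  set A : ℝ → ℝ := fun x => gaussianPDFReal m v x *
    ((x - m) ^ 2 + d ^ 2 / 4 - |d| * |x - m|) with hA
  have step1 : (fun x => (Real.toNNReal (gaussianPDFReal m v x) : ℝ≥0) •
      min ((m - d / 2 - x) ^ 2) ((m + d / 2 - x) ^ 2)) = A := by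
    funext x
    rw [NNReal.smul_def, Real.coe_toNNReal _ (gaussianPDFReal_nonneg m v x), smul_eq_mul,
      hmin x, hA]
  rw [step1]
  -- Step 3: change of variables x = σ y + m
  have e1 : ∫ x, A x = ∫ x, A (x + m) := (integral_add_right_eq_self A m).symm
  have e2 : ∫ x, A (x + m) = σ * ∫ x, A (σ * x + m) := by
    rw [MeasureTheory.Measure.integral_comp_mul_left (fun x => A (x + m)) σ,
      abs_of_pos (inv_pos.mpr hσ), smul_eq_mul, ← mul_assoc, mul_inv_cancel₀ hσ.ne', one_mul]
  have e3 : (fun x => A (σ * x + m)) = fun x => (σ * Real.sqrt (2 * π))⁻¹ *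
      (σ ^ 2 * (x ^ 2 * gaussE x) + d ^ 2 / 4 * gaussE x - |d| * σ * (|x| * gaussE x)) := by
    funext x
    rw [hA]
    simp only [gaussianPDFReal, gaussE, hvco]
    have h1 : Real.sqrt (2 * π * σ ^ 2) = Real.sqrt (2 * π) * σ := by
      rw [Real.sqrt_mul (by positivity), Real.sqrt_sq hσ.le]
    have h2 : -(σ * x + m - m) ^ 2 / (2 * σ ^ 2) = -(x ^ 2 / 2) := by
      field_simp; ring
    have h3 : |σ * x + m - m| = σ * |x| := by
      rw [show σ * x + m - m = σ * x by ring, abs_mul, abs_of_pos hσ]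
    rw [h2, h3]
    rw [show σ * x + m - m = σ * x by ring]
    rw [h1]
    ring
  rw [e1, e2, e3, integral_const_mul]
  -- Step 4: split the integral and use the moment computations
  have hsplit : ∫ x : ℝ, (σ ^ 2 * (x ^ 2 * gaussE x) + d ^ 2 / 4 * gaussE x
      - |d| * σ * (|x| * gaussE x))
      = σ ^ 2 * Real.sqrt (2 * π) + d ^ 2 / 4 * Real.sqrt (2 * π) - |d| * σ * 2 := by
    have i1 : Integrable (fun x : ℝ => σ ^ 2 * (x ^ 2 * gaussE x)) := gaussE_sqint.const_mul _
    have i2 : Integrable (fun x : ℝ => d ^ 2 / 4 * gaussE x) := gaussE_int.const_mul _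
    have i3 : Integrable (fun x : ℝ => |d| * σ * (|x| * gaussE x)) := gaussE_absint.const_mul _
    have i12 : Integrable (fun x : ℝ => σ ^ 2 * (x ^ 2 * gaussE x) + d ^ 2 / 4 * gaussE x) :=
      i1.add i2
    rw [integral_sub i12 i3, integral_add i1 i2,
      integral_const_mul, integral_const_mul, integral_const_mul,
      int_sq_gaussE, int_gaussE, int_abs_gaussE]
  rw [hsplit]
  -- Step 5: arithmetic
  have hπ : (0:ℝ) < π := pi_pos
  have hs : (0:ℝ) < Real.sqrt (2 * π) := Real.sqrt_pos.mpr (by positivity)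
  have hkey : Real.sqrt (2 / π) * Real.sqrt (2 * π) = 2 := by
    rw [← Real.sqrt_mul (by positivity)]
    rw [show 2 / π * (2 * π) = 4 by field_simp; ring]
    rw [show (4:ℝ) = 2 ^ 2 by norm_num, Real.sqrt_sq two_pos.le]
  rw [show Real.sqrt (2 / π) = 2 / Real.sqrt (2 * π) by
    rw [eq_div_iff hs.ne']; exact hkey]
  field_simp
end
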